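/- arXiv:1602.00042 — 2 statements merged into one kernel-verified Lean document; each statement's English description precedes it below -/
import Mathlib

section
/- Let L>0, Ω=(0,L)×(-1,1), and κ>0. Let w=(w₁,w₂) be a smooth Ω-periodic, divergence-free, symmetric vector field, and let θ and ξ be smooth Ω-periodic scalar functions. Then |∫_Ω ((w·∇)θ)(x) ξ(x) dx| ≤ (κ/20)‖∇ξ‖² + (5/κ)‖θ‖_{L^∞}² (‖w₁‖² + ‖∇w₁‖²), where ‖θ‖_{L^∞} is the supremum of |θ| on Ω. -/
open MeasureTheory Real Filter

noncomputable section

/-- First partial derivative. -/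
def d1 (f : ℝ × ℝ → ℝ) (p : ℝ × ℝ) : ℝ := fderiv ℝ f p (1, 0)

/-- Second partial derivative. -/
def d2 (f : ℝ × ℝ → ℝ) (p : ℝ × ℝ) : ℝ := fderiv ℝ f p (0, 1)

/-- Laplacian. -/
def lap (f : ℝ × ℝ → ℝ) (p : ℝ × ℝ) : ℝ := d1 (d1 f) p + d2 (d2 f) p

/-- The domain Ω = (0,L) × (-1,1). -/
def Omg (L : ℝ) : Set (ℝ × ℝ) := Set.Ioo 0 L ×ˢ Set.Ioo (-1) 1

/-- Squared L² norm over Ω. -/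
def nrmSq (L : ℝ) (f : ℝ × ℝ → ℝ) : ℝ := ∫ p in Omg L, (f p) ^ 2

/-- L² norm over Ω. -/
def nrm (L : ℝ) (f : ℝ × ℝ → ℝ) : ℝ := Real.sqrt (nrmSq L f)

/-- Squared L² norm of the gradient over Ω. -/
def gradNrmSq (L : ℝ) (f : ℝ × ℝ → ℝ) : ℝ := ∫ p in Omg L, ((d1 f p) ^ 2 + (d2 f p) ^ 2)

/-- L² norm of the gradient over Ω. -/
def gradNrm (L : ℝ) (f : ℝ × ℝ → ℝ) : ℝ := Real.sqrt (gradNrmSq L f)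

/-- Squared L² norm of the Laplacian over Ω. -/
def lapNrmSq (L : ℝ) (f : ℝ × ℝ → ℝ) : ℝ := ∫ p in Omg L, (lap f p) ^ 2

/-- L² norm of the Laplacian over Ω. -/
def lapNrm (L : ℝ) (f : ℝ × ℝ → ℝ) : ℝ := Real.sqrt (lapNrmSq L f)

/-- Ω-periodic: L-periodic in x₁ and 2-periodic in x₂. -/
def OmgPeriodic (L : ℝ) (f : ℝ × ℝ → ℝ) : Prop :=
  (∀ x y : ℝ, f (x + L, y) = f (x, y)) ∧ (∀ x y : ℝ, f (x, y + 2) = f (x, y))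

/-- Divergence-free vector field. -/
def DivFree (u₁ u₂ : ℝ × ℝ → ℝ) : Prop := ∀ p, d1 u₁ p + d2 u₂ p = 0

/-- Symmetric vector field: first component even in x₂, second odd in x₂. -/
def Symm (u₁ u₂ : ℝ × ℝ → ℝ) : Prop :=
  (∀ x y : ℝ, u₁ (x, -y) = u₁ (x, y)) ∧ (∀ x y : ℝ, u₂ (x, -y) = -u₂ (x, y))


lemma one_le_top' : ((⊤ : ℕ∞) : WithTop ℕ∞) ≠ 0 := by
  simp

lemma cont_d1 {f : ℝ × ℝ → ℝ} (hf : ContDiff ℝ (⊤ : ℕ∞) f) : Continuous (d1 f) :=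
  (hf.continuous_fderiv one_le_top').clm_apply continuous_const

lemma cont_d2 {f : ℝ × ℝ → ℝ} (hf : ContDiff ℝ (⊤ : ℕ∞) f) : Continuous (d2 f) :=
  (hf.continuous_fderiv one_le_top').clm_apply continuous_const

lemma hasDerivAt_slice1 {f : ℝ × ℝ → ℝ} (hf : ContDiff ℝ (⊤ : ℕ∞) f) (x y : ℝ) :
    HasDerivAt (fun t => f (t, y)) (d1 f (x, y)) x := by
  have h1 : HasDerivAt (fun t : ℝ => (t, y)) ((1 : ℝ), (0 : ℝ)) x := by
    simpa using ((hasDerivAt_id x).prodMk (hasDerivAt_const x y))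
  exact ((hf.differentiable one_le_top' (x, y)).hasFDerivAt.comp_hasDerivAt x h1)

lemma hasDerivAt_slice2 {f : ℝ × ℝ → ℝ} (hf : ContDiff ℝ (⊤ : ℕ∞) f) (x y : ℝ) :
    HasDerivAt (fun t => f (x, t)) (d2 f (x, y)) y := by
  have h1 : HasDerivAt (fun t : ℝ => (x, t)) ((0 : ℝ), (1 : ℝ)) y := by
    simpa using ((hasDerivAt_const y x).prodMk (hasDerivAt_id y))
  exact ((hf.differentiable one_le_top' (x, y)).hasFDerivAt.comp_hasDerivAt y h1)

lemma intOn_Omg {L : ℝ} {f : ℝ × ℝ → ℝ} (hf : Continuous f) : IntegrableOn f (Omg L) := by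
  have h : IntegrableOn f (Set.Icc 0 L ×ˢ Set.Icc (-1) 1) :=
    hf.continuousOn.integrableOn_compact (isCompact_Icc.prod isCompact_Icc)
  exact h.mono_set (Set.prod_mono Set.Ioo_subset_Icc_self Set.Ioo_subset_Icc_self)

lemma fubini_std {L : ℝ} {f : ℝ × ℝ → ℝ} (hf : Continuous f) :
    ∫ p in Omg L, f p = ∫ x in Set.Ioo 0 L, ∫ y in Set.Ioo (-1 : ℝ) 1, f (x, y) := by
  have h := intOn_Omg (L := L) hf
  rw [Omg] at h ⊢
  rw [Measure.volume_eq_prod] at h ⊢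
  exact setIntegral_prod f h

lemma fubini_symm {L : ℝ} {f : ℝ × ℝ → ℝ} (hf : Continuous f) :
    ∫ p in Omg L, f p = ∫ y in Set.Ioo (-1 : ℝ) 1, ∫ x in Set.Ioo 0 L, f (x, y) := by
  have h := intOn_Omg (L := L) hf
  rw [Omg] at h ⊢
  rw [Measure.volume_eq_prod] at h ⊢
  simp only [← Measure.prod_restrict, IntegrableOn] at h ⊢
  exact integral_prod_symm f h

lemma setIoo_eq_interval {a b : ℝ} (hab : a ≤ b) (h : ℝ → ℝ) :
    ∫ t in Set.Ioo a b, h t = ∫ t in a..b, h t := by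
  rw [intervalIntegral.integral_of_le hab, integral_Ioc_eq_integral_Ioo]

lemma slice1_cont {f : ℝ × ℝ → ℝ} (hf : Continuous f) (y : ℝ) :
    Continuous (fun t => f (t, y)) := hf.comp (continuous_id.prodMk continuous_const)

lemma slice2_cont {f : ℝ × ℝ → ℝ} (hf : Continuous f) (x : ℝ) :
    Continuous (fun t => f (x, t)) := hf.comp (continuous_const.prodMk continuous_id)

lemma int_d1_zero {L : ℝ} (hL : 0 < L) {g : ℝ × ℝ → ℝ} (hg : ContDiff ℝ (⊤ : ℕ∞) g)
    (hp : ∀ x y : ℝ, g (x + L, y) = g (x, y)) :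
    ∫ p in Omg L, d1 g p = 0 := by
  rw [fubini_symm (cont_d1 hg)]
  have : ∀ y : ℝ, ∫ x in Set.Ioo 0 L, d1 g (x, y) = 0 := by
    intro y
    rw [setIoo_eq_interval hL.le]
    have hftc : ∫ x in (0:ℝ)..L, d1 g (x, y) = g (L, y) - g (0, y) := by
      apply intervalIntegral.integral_eq_sub_of_hasDerivAt
      · intro x _; exact hasDerivAt_slice1 hg x y
      · exact (slice1_cont (cont_d1 hg) y).intervalIntegrable 0 L
    rw [hftc]
    have := hp 0 y; simp at this; rw [this]; ring
  simp [this]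

lemma int_d2_zero {L : ℝ} (hL : 0 < L) {g : ℝ × ℝ → ℝ} (hg : ContDiff ℝ (⊤ : ℕ∞) g)
    (hp : ∀ x y : ℝ, g (x, y + 2) = g (x, y)) :
    ∫ p in Omg L, d2 g p = 0 := by
  rw [fubini_std (cont_d2 hg)]
  have : ∀ x : ℝ, ∫ y in Set.Ioo (-1:ℝ) 1, d2 g (x, y) = 0 := by
    intro x
    rw [setIoo_eq_interval (by norm_num)]
    have hftc := intervalIntegral.integral_eq_sub_of_hasDerivAt (a := (-1:ℝ)) (b := 1)
      (f := fun t => g (x, t)) (f' := fun t => d2 g (x, t))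
      (fun y _ => hasDerivAt_slice2 hg x y)
      ((slice2_cont (cont_d2 hg) x).intervalIntegrable (-1) 1)
    rw [hftc]
    have := hp x (-1); norm_num at this; rw [this]; ring
  simp [this]

lemma d1_mul {f g : ℝ × ℝ → ℝ} (hf : ContDiff ℝ (⊤ : ℕ∞) f) (hg : ContDiff ℝ (⊤ : ℕ∞) g)
    (p : ℝ × ℝ) : d1 (fun q => f q * g q) p = d1 f p * g p + f p * d1 g p := by
  unfold d1
  rw [fderiv_fun_mul (hf.differentiable one_le_top' p) (hg.differentiable one_le_top' p)]
  simp; ring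

lemma d2_mul {f g : ℝ × ℝ → ℝ} (hf : ContDiff ℝ (⊤ : ℕ∞) f) (hg : ContDiff ℝ (⊤ : ℕ∞) g)
    (p : ℝ × ℝ) : d2 (fun q => f q * g q) p = d2 f p * g p + f p * d2 g p := by
  unfold d2
  rw [fderiv_fun_mul (hf.differentiable one_le_top' p) (hg.differentiable one_le_top' p)]
  simp; ring

lemma cs_interval {f : ℝ → ℝ} (hf : Continuous f) {a b : ℝ} (hab : a ≤ b) :
    (∫ t in a..b, f t) ^ 2 ≤ (b - a) * ∫ t in a..b, (f t) ^ 2 := by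
  set I1 := ∫ t in a..b, f t with hI1
  set I2 := ∫ t in a..b, (f t) ^ 2 with hI2
  have key : ∀ s : ℝ, 0 ≤ (b - a) * (s * s) + (2 * I1) * s + I2 := by
    intro s
    have hint1 : IntervalIntegrable f volume a b := hf.intervalIntegrable a b
    have hint2 : IntervalIntegrable (fun t => (f t) ^ 2) volume a b :=
      (hf.pow 2).intervalIntegrable a b
    have hint3 : IntervalIntegrable (fun t => (2 * s) * f t) volume a b :=
      ((continuous_const.mul hf)).intervalIntegrable a b
    have e : ∫ t in a..b, (s + f t) ^ 2
        = ∫ t in a..b, (s ^ 2 + ((2 * s) * f t + (f t) ^ 2)) := by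
      congr 1; ext t; ring
    have e2 : ∫ t in a..b, (s ^ 2 + ((2 * s) * f t + (f t) ^ 2))
        = (b - a) * s ^ 2 + ((2 * s) * I1 + I2) := by
      rw [intervalIntegral.integral_add (intervalIntegrable_const) (hint3.add hint2),
        intervalIntegral.integral_add hint3 hint2,
        intervalIntegral.integral_const_mul, intervalIntegral.integral_const]
      simp [smul_eq_mul]
      rw [hI1, hI2]
    have pos : 0 ≤ ∫ t in a..b, (s + f t) ^ 2 :=
      intervalIntegral.integral_nonneg hab (fun u _ => sq_nonneg _)
    rw [e, e2] at pos
    nlinarith [pos]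
  have hd := discrim_le_zero key
  rw [discrim] at hd
  nlinarith [hd]

lemma abs_integral_interval_sq {f : ℝ → ℝ} (hf : Continuous f) {y : ℝ}
    (hy : y ∈ Set.Icc (-1 : ℝ) 1) :
    (∫ t in (0:ℝ)..y, f t) ^ 2 ≤ |y| * ∫ t in (-1:ℝ)..1, (f t) ^ 2 := by
  have hint2 : IntervalIntegrable (fun t => (f t) ^ 2) volume (-1) 1 :=
    (hf.pow 2).intervalIntegrable _ _
  rcases le_or_gt 0 y with hy0 | hy0
  · have h1 := cs_interval hf hy0
    have h2 : (∫ t in (0:ℝ)..y, (f t) ^ 2) ≤ ∫ t in (-1:ℝ)..1, (f t) ^ 2 :=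
      intervalIntegral.integral_mono_interval (by norm_num) hy0 hy.2
        (Filter.Eventually.of_forall (fun t => sq_nonneg _)) hint2
    have habs : |y| = y := abs_of_nonneg hy0
    nlinarith [intervalIntegral.integral_nonneg (μ := volume) hy0 (fun u _ => sq_nonneg (f u)),
      mul_le_mul_of_nonneg_left h2 hy0]
  · have hsym : (∫ t in (0:ℝ)..y, f t) = -(∫ t in y..(0:ℝ), f t) :=
      (intervalIntegral.integral_symm _ _)
    have h1 := cs_interval hf hy0.le
    have h2 : (∫ t in y..(0:ℝ), (f t) ^ 2) ≤ ∫ t in (-1:ℝ)..1, (f t) ^ 2 :=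
      intervalIntegral.integral_mono_interval hy.1 hy0.le (by norm_num)
        (Filter.Eventually.of_forall (fun t => sq_nonneg _)) hint2
    have habs : |y| = -y := abs_of_neg hy0
    rw [hsym]
    have hnn : (0:ℝ) ≤ 0 - y := by linarith
    nlinarith [intervalIntegral.integral_nonneg (μ := volume) hy0.le (fun u _ => sq_nonneg (f u)),
      mul_le_mul_of_nonneg_left h2 hnn]

lemma integral_abs_Ioo : ∫ y in Set.Ioo (-1:ℝ) 1, |y| = 1 := by
  rw [setIoo_eq_interval (by norm_num)]
  have h1 : IntervalIntegrable (fun y : ℝ => |y|) volume (-1) 0 :=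
    (continuous_abs).intervalIntegrable _ _
  have h2 : IntervalIntegrable (fun y : ℝ => |y|) volume 0 1 :=
    (continuous_abs).intervalIntegrable _ _
  rw [← intervalIntegral.integral_add_adjacent_intervals h1 h2]
  have e1 : ∫ y in (-1:ℝ)..0, |y| = ∫ y in (-1:ℝ)..0, -y := by
    apply intervalIntegral.integral_congr
    intro t ht
    rw [Set.uIcc_of_le (by norm_num : (-1:ℝ) ≤ 0)] at ht
    exact abs_of_nonpos ht.2
  have e2 : ∫ y in (0:ℝ)..1, |y| = ∫ y in (0:ℝ)..1, y := by
    apply intervalIntegral.integral_congr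
    intro t ht
    rw [Set.uIcc_of_le (by norm_num : (0:ℝ) ≤ 1)] at ht
    exact abs_of_nonneg ht.1
  rw [e1, e2, intervalIntegral.integral_neg, integral_id, integral_id]
  norm_num

lemma w2_sq_bound {L : ℝ} (hL : 0 < L) {w₁ w₂ : ℝ × ℝ → ℝ}
    (hw₁ : ContDiff ℝ (⊤ : ℕ∞) w₁) (hw₂ : ContDiff ℝ (⊤ : ℕ∞) w₂)
    (hdiv : ∀ p, d1 w₁ p + d2 w₂ p = 0)
    (hodd : ∀ x y : ℝ, w₂ (x, -y) = -w₂ (x, y)) :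
    ∫ p in Omg L, (w₂ p) ^ 2 ≤ ∫ p in Omg L, (d1 w₁ p) ^ 2 := by
  -- pointwise representation and bound
  have hzero : ∀ x : ℝ, w₂ (x, 0) = 0 := by
    intro x
    have := hodd x 0
    norm_num at this
    linarith
  have hrepr : ∀ x y : ℝ, w₂ (x, y) = ∫ t in (0:ℝ)..y, -(d1 w₁ (x, t)) := by
    intro x y
    have hftc := intervalIntegral.integral_eq_sub_of_hasDerivAt (a := (0:ℝ)) (b := y)
      (f := fun t => w₂ (x, t)) (f' := fun t => d2 w₂ (x, t))
      (fun t _ => hasDerivAt_slice2 hw₂ x t)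
      ((slice2_cont (cont_d2 hw₂) x).intervalIntegrable 0 y)
    have hcongr : ∫ t in (0:ℝ)..y, d2 w₂ (x, t) = ∫ t in (0:ℝ)..y, -(d1 w₁ (x, t)) := by
      apply intervalIntegral.integral_congr
      intro t _
      have := hdiv (x, t)
      simp only []
      linarith
    rw [← hcongr, hftc]
    rw [hzero x]
    ring
  have hptwise : ∀ x : ℝ, ∀ y ∈ Set.Icc (-1:ℝ) 1,
      (w₂ (x, y)) ^ 2 ≤ |y| * ∫ t in (-1:ℝ)..1, (d1 w₁ (x, t)) ^ 2 := by
    intro x y hy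
    rw [hrepr x y]
    have := abs_integral_interval_sq (f := fun t => -(d1 w₁ (x, t)))
      ((slice2_cont (cont_d1 hw₁) x).neg) hy
    simpa [neg_pow] using this
  set C : ℝ → ℝ := fun x => ∫ t in (-1:ℝ)..1, (d1 w₁ (x, t)) ^ 2 with hC
  -- inner integral bound for each x
  have hinner : ∀ x : ℝ, (∫ y in Set.Ioo (-1:ℝ) 1, (w₂ (x, y)) ^ 2) ≤ C x := by
    intro x
    have hle : (∫ y in Set.Ioo (-1:ℝ) 1, (w₂ (x, y)) ^ 2)
        ≤ ∫ y in Set.Ioo (-1:ℝ) 1, |y| * C x := by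
      apply setIntegral_mono_on
      · exact (((slice2_cont (hw₂.continuous) x).pow 2).integrableOn_Icc
          (a := -1) (b := 1) |>.mono_set Set.Ioo_subset_Icc_self)
      · exact ((continuous_abs.mul continuous_const).integrableOn_Icc
          (a := -1) (b := 1) |>.mono_set Set.Ioo_subset_Icc_self)
      · exact measurableSet_Ioo
      · intro y hy
        exact hptwise x y (Set.Ioo_subset_Icc_self hy)
    have heq : ∫ y in Set.Ioo (-1:ℝ) 1, |y| * C x = C x := by
      rw [integral_mul_const, integral_abs_Ioo, one_mul]
    linarith [hle, heq.le]
  -- combine with Fubini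
  have hcont2 : Continuous fun p : ℝ × ℝ => (w₂ p) ^ 2 := (hw₂.continuous).pow 2
  have hcont1 : Continuous fun p : ℝ × ℝ => (d1 w₁ p) ^ 2 := (cont_d1 hw₁).pow 2
  rw [fubini_std hcont2, fubini_std hcont1]
  have hCeq : ∀ x : ℝ, (∫ y in Set.Ioo (-1:ℝ) 1, (d1 w₁ (x, y)) ^ 2) = C x := by
    intro x
    rw [setIoo_eq_interval (by norm_num)]
  -- integrability of the iterated integrals
  have hint2 : Integrable (fun x => ∫ y in Set.Ioo (-1:ℝ) 1, (w₂ (x, y)) ^ 2)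
      ((volume : Measure ℝ).restrict (Set.Ioo 0 L)) := by
    have h := intOn_Omg (L := L) hcont2
    rw [Omg] at h
    rw [Measure.volume_eq_prod] at h
    simp only [← Measure.prod_restrict, IntegrableOn] at h
    exact h.integral_prod_left
  have hint1 : Integrable (fun x => ∫ y in Set.Ioo (-1:ℝ) 1, (d1 w₁ (x, y)) ^ 2)
      ((volume : Measure ℝ).restrict (Set.Ioo 0 L)) := by
    have h := intOn_Omg (L := L) hcont1
    rw [Omg] at h
    rw [Measure.volume_eq_prod] at h
    simp only [← Measure.prod_restrict, IntegrableOn] at h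
    exact h.integral_prod_left
  apply integral_mono hint2 hint1
  intro x
  simp only []
  rw [hCeq x]
  exact hinner x

lemma young_step (κ M a b : ℝ) (hκ : 0 < κ) :
    M * (a * b) ≤ κ / 20 * b ^ 2 + 5 / κ * (M ^ 2 * a ^ 2) := by
  have hne : κ ≠ 0 := hκ.ne'
  have key : κ / 20 * b ^ 2 + 5 / κ * (M ^ 2 * a ^ 2) - M * (a * b)
      = (κ * b - 10 * M * a) ^ 2 / (20 * κ) := by
    field_simp
    ring
  nlinarith [div_nonneg (sq_nonneg (κ * b - 10 * M * a)) (by linarith : (0:ℝ) ≤ 20 * κ)]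

lemma ibp {L : ℝ} (hL : 0 < L) {w₁ w₂ θ ξ : ℝ × ℝ → ℝ}
    (hw₁ : ContDiff ℝ (⊤ : ℕ∞) w₁) (hw₂ : ContDiff ℝ (⊤ : ℕ∞) w₂)
    (hθ : ContDiff ℝ (⊤ : ℕ∞) θ) (hξ : ContDiff ℝ (⊤ : ℕ∞) ξ)
    (hpw₁ : (∀ x y : ℝ, w₁ (x + L, y) = w₁ (x, y)) ∧ (∀ x y : ℝ, w₁ (x, y + 2) = w₁ (x, y)))
    (hpw₂ : (∀ x y : ℝ, w₂ (x + L, y) = w₂ (x, y)) ∧ (∀ x y : ℝ, w₂ (x, y + 2) = w₂ (x, y)))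
    (hpθ : (∀ x y : ℝ, θ (x + L, y) = θ (x, y)) ∧ (∀ x y : ℝ, θ (x, y + 2) = θ (x, y)))
    (hpξ : (∀ x y : ℝ, ξ (x + L, y) = ξ (x, y)) ∧ (∀ x y : ℝ, ξ (x, y + 2) = ξ (x, y)))
    (hdiv : ∀ p, d1 w₁ p + d2 w₂ p = 0) :
    (∫ p in Omg L, (w₁ p * d1 θ p + w₂ p * d2 θ p) * ξ p)
      = -∫ p in Omg L, (w₁ p * d1 ξ p + w₂ p * d2 ξ p) * θ p := by
  set G₁ : ℝ × ℝ → ℝ := fun q => w₁ q * (θ q * ξ q) with hG₁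
  set G₂ : ℝ × ℝ → ℝ := fun q => w₂ q * (θ q * ξ q) with hG₂
  have hG₁s : ContDiff ℝ (⊤ : ℕ∞) G₁ := hw₁.mul (hθ.mul hξ)
  have hG₂s : ContDiff ℝ (⊤ : ℕ∞) G₂ := hw₂.mul (hθ.mul hξ)
  have key : ∀ p, d1 G₁ p + d2 G₂ p
      = (w₁ p * d1 θ p + w₂ p * d2 θ p) * ξ p
        + (w₁ p * d1 ξ p + w₂ p * d2 ξ p) * θ p := by
    intro p
    rw [hG₁, hG₂, d1_mul hw₁ (hθ.mul hξ), d2_mul hw₂ (hθ.mul hξ),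
      d1_mul hθ hξ, d2_mul hθ hξ]
    linear_combination (θ p * ξ p) * hdiv p
  have hzero : ∫ p in Omg L, (d1 G₁ p + d2 G₂ p) = 0 := by
    rw [integral_add (intOn_Omg (cont_d1 hG₁s)) (intOn_Omg (cont_d2 hG₂s)),
      int_d1_zero hL hG₁s (fun x y => by simp only [hG₁, hpw₁.1, hpθ.1, hpξ.1]),
      int_d2_zero hL hG₂s (fun x y => by simp only [hG₂, hpw₂.2, hpθ.2, hpξ.2])]
    ring
  have hA : Continuous fun p => (w₁ p * d1 θ p + w₂ p * d2 θ p) * ξ p :=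
    (((hw₁.continuous.mul (cont_d1 hθ)).add (hw₂.continuous.mul (cont_d2 hθ))).mul
      hξ.continuous)
  have hB : Continuous fun p => (w₁ p * d1 ξ p + w₂ p * d2 ξ p) * θ p :=
    (((hw₁.continuous.mul (cont_d1 hξ)).add (hw₂.continuous.mul (cont_d2 hξ))).mul
      hθ.continuous)
  have hsum : (∫ p in Omg L, (w₁ p * d1 θ p + w₂ p * d2 θ p) * ξ p)
      + (∫ p in Omg L, (w₁ p * d1 ξ p + w₂ p * d2 ξ p) * θ p) = 0 := by
    rw [← integral_add (intOn_Omg hA) (intOn_Omg hB)]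
    rw [← hzero]
    apply setIntegral_congr_fun (measurableSet_Ioo.prod measurableSet_Ioo)
    intro p _
    exact (key p).symm
  linarith

lemma main_aux (L : ℝ) (hL : 0 < L) (κ : ℝ) (hκ : 0 < κ)
    (w₁ w₂ θ ξ : ℝ × ℝ → ℝ)
    (hw₁ : ContDiff ℝ (⊤ : ℕ∞) w₁) (hw₂ : ContDiff ℝ (⊤ : ℕ∞) w₂)
    (hθ : ContDiff ℝ (⊤ : ℕ∞) θ) (hξ : ContDiff ℝ (⊤ : ℕ∞) ξ)
    (hpw₁ : (∀ x y : ℝ, w₁ (x + L, y) = w₁ (x, y)) ∧ (∀ x y : ℝ, w₁ (x, y + 2) = w₁ (x, y)))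
    (hpw₂ : (∀ x y : ℝ, w₂ (x + L, y) = w₂ (x, y)) ∧ (∀ x y : ℝ, w₂ (x, y + 2) = w₂ (x, y)))
    (hpθ : (∀ x y : ℝ, θ (x + L, y) = θ (x, y)) ∧ (∀ x y : ℝ, θ (x, y + 2) = θ (x, y)))
    (hpξ : (∀ x y : ℝ, ξ (x + L, y) = ξ (x, y)) ∧ (∀ x y : ℝ, ξ (x, y + 2) = ξ (x, y)))
    (hdiv : ∀ p, d1 w₁ p + d2 w₂ p = 0)
    (hsym : (∀ x y : ℝ, w₁ (x, -y) = w₁ (x, y)) ∧ (∀ x y : ℝ, w₂ (x, -y) = -w₂ (x, y))) :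
    |∫ p in Omg L, (w₁ p * d1 θ p + w₂ p * d2 θ p) * ξ p| ≤
      κ / 20 * (∫ p in Omg L, ((d1 ξ p) ^ 2 + (d2 ξ p) ^ 2))
        + 5 / κ * (sSup ((fun p : ℝ × ℝ => |θ p|) '' Omg L)) ^ 2
            * ((∫ p in Omg L, (w₁ p) ^ 2) + ∫ p in Omg L, ((d1 w₁ p) ^ 2 + (d2 w₁ p) ^ 2)) := by
  set M : ℝ := sSup ((fun p : ℝ × ℝ => |θ p|) '' Omg L) with hMdef
  have hbdd : BddAbove ((fun p : ℝ × ℝ => |θ p|) '' Omg L) := by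
    have hK : IsCompact (Set.Icc (0:ℝ) L ×ˢ Set.Icc (-1:ℝ) 1) := isCompact_Icc.prod isCompact_Icc
    have h1 : BddAbove ((fun p : ℝ × ℝ => |θ p|) '' (Set.Icc (0:ℝ) L ×ˢ Set.Icc (-1:ℝ) 1)) :=
      (hK.image_of_continuousOn ((hθ.continuous.abs).continuousOn)).bddAbove
    exact h1.mono (Set.image_mono
      (Set.prod_mono Set.Ioo_subset_Icc_self Set.Ioo_subset_Icc_self))
  have hM : ∀ p ∈ Omg L, |θ p| ≤ M := fun p hp => le_csSup hbdd ⟨p, hp, rfl⟩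
  have hM0 : 0 ≤ M := le_trans (abs_nonneg (θ (L/2, 0)))
    (hM (L/2, 0) ⟨⟨by linarith, by linarith⟩, by norm_num⟩)
  rw [ibp hL hw₁ hw₂ hθ hξ hpw₁ hpw₂ hpθ hpξ hdiv, abs_neg]
  have hB : Continuous fun p => (w₁ p * d1 ξ p + w₂ p * d2 ξ p) * θ p :=
    (((hw₁.continuous.mul (cont_d1 hξ)).add (hw₂.continuous.mul (cont_d2 hξ))).mul
      hθ.continuous)
  set bound : ℝ × ℝ → ℝ := fun p =>
    κ / 20 * ((d1 ξ p) ^ 2 + (d2 ξ p) ^ 2) + (5 / κ * M ^ 2) * ((w₁ p) ^ 2 + (w₂ p) ^ 2)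
    with hbound
  have hboundc : Continuous bound := by
    apply Continuous.add
    · exact continuous_const.mul (((cont_d1 hξ).pow 2).add ((cont_d2 hξ).pow 2))
    · exact continuous_const.mul (((hw₁.continuous.pow 2)).add ((hw₂.continuous.pow 2)))
  have step1 : |∫ p in Omg L, (w₁ p * d1 ξ p + w₂ p * d2 ξ p) * θ p|
      ≤ ∫ p in Omg L, |(w₁ p * d1 ξ p + w₂ p * d2 ξ p) * θ p| :=
    by simpa only [Real.norm_eq_abs] using
      norm_integral_le_integral_norm (μ := volume.restrict (Omg L))
        (fun p => (w₁ p * d1 ξ p + w₂ p * d2 ξ p) * θ p)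
  have step2 : (∫ p in Omg L, |(w₁ p * d1 ξ p + w₂ p * d2 ξ p) * θ p|)
      ≤ ∫ p in Omg L, bound p := by
    apply setIntegral_mono_on (intOn_Omg hB.abs) (intOn_Omg hboundc)
      (measurableSet_Ioo.prod measurableSet_Ioo)
    intro p hp
    have h1 : |(w₁ p * d1 ξ p + w₂ p * d2 ξ p) * θ p|
        ≤ (|w₁ p| * |d1 ξ p| + |w₂ p| * |d2 ξ p|) * |θ p| := by
      rw [abs_mul]
      apply mul_le_mul_of_nonneg_right _ (abs_nonneg _)
      calc |w₁ p * d1 ξ p + w₂ p * d2 ξ p| ≤ |w₁ p * d1 ξ p| + |w₂ p * d2 ξ p| := abs_add_le _ _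
        _ = |w₁ p| * |d1 ξ p| + |w₂ p| * |d2 ξ p| := by rw [abs_mul, abs_mul]
    have h2 : (|w₁ p| * |d1 ξ p| + |w₂ p| * |d2 ξ p|) * |θ p|
        ≤ (|w₁ p| * |d1 ξ p| + |w₂ p| * |d2 ξ p|) * M :=
      mul_le_mul_of_nonneg_left (hM p hp) (by positivity)
    refine (h1.trans h2).trans ?_
    have y1 := young_step κ M |w₁ p| |d1 ξ p| hκ
    have y2 := young_step κ M |w₂ p| |d2 ξ p| hκ
    simp only [sq_abs] at y1 y2
    rw [hbound]
    nlinarith [y1, y2]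
  have step3 : ∫ p in Omg L, bound p
      = κ / 20 * (∫ p in Omg L, ((d1 ξ p) ^ 2 + (d2 ξ p) ^ 2))
        + (5 / κ * M ^ 2) * ((∫ p in Omg L, (w₁ p) ^ 2) + ∫ p in Omg L, (w₂ p) ^ 2) := by
    rw [hbound]
    beta_reduce
    rw [integral_add (f := fun p => κ / 20 * ((d1 ξ p) ^ 2 + (d2 ξ p) ^ 2))
      (g := fun p => (5 / κ * M ^ 2) * ((w₁ p) ^ 2 + (w₂ p) ^ 2))
      ((intOn_Omg (((cont_d1 hξ).pow 2).add ((cont_d2 hξ).pow 2))).const_mul _)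
      ((intOn_Omg (((hw₁.continuous.pow 2)).add ((hw₂.continuous.pow 2)))).const_mul _),
      integral_const_mul, integral_const_mul,
      integral_add (f := fun p => (w₁ p) ^ 2) (g := fun p => (w₂ p) ^ 2) (intOn_Omg (hw₁.continuous.pow 2)) (intOn_Omg (hw₂.continuous.pow 2))]
  have step4 : (∫ p in Omg L, (w₂ p) ^ 2) ≤ ∫ p in Omg L, ((d1 w₁ p) ^ 2 + (d2 w₁ p) ^ 2) := by
    refine (w2_sq_bound hL hw₁ hw₂ hdiv hsym.2).trans ?_
    apply integral_mono (intOn_Omg ((cont_d1 hw₁).pow 2))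
      (intOn_Omg (((cont_d1 hw₁).pow 2).add ((cont_d2 hw₁).pow 2)))
    intro p
    simp only []
    show (d1 w₁ p) ^ 2 ≤ (d1 w₁ p) ^ 2 + (d2 w₁ p) ^ 2
    nlinarith [sq_nonneg (d2 w₁ p)]
  have hc : 0 ≤ 5 / κ * M ^ 2 := by positivity
  calc |∫ p in Omg L, (w₁ p * d1 ξ p + w₂ p * d2 ξ p) * θ p|
      ≤ ∫ p in Omg L, bound p := step1.trans step2
    _ = _ := step3
    _ ≤ _ := by
        have := mul_le_mul_of_nonneg_left
          (add_le_add_left step4 (∫ p in Omg L, (w₁ p) ^ 2)) hc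
        nlinarith [this]

/-- estimate (3.9) of the paper:
`|∫_Ω ((w·∇)θ) ξ| ≤ (κ/20)‖∇ξ‖² + (5/κ)‖θ‖_∞² (‖w₁‖² + ‖∇w₁‖²)`. -/
theorem nonlinear_term_estimate (L : ℝ) (hL : 0 < L) (κ : ℝ) (hκ : 0 < κ)
    (w₁ w₂ θ ξ : ℝ × ℝ → ℝ)
    (hw₁ : ContDiff ℝ (⊤ : ℕ∞) w₁) (hw₂ : ContDiff ℝ (⊤ : ℕ∞) w₂)
    (hθ : ContDiff ℝ (⊤ : ℕ∞) θ) (hξ : ContDiff ℝ (⊤ : ℕ∞) ξ)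
    (hpw₁ : OmgPeriodic L w₁) (hpw₂ : OmgPeriodic L w₂)
    (hpθ : OmgPeriodic L θ) (hpξ : OmgPeriodic L ξ)
    (hdiv : DivFree w₁ w₂) (hsym : Symm w₁ w₂) :
    |∫ p in Omg L, (w₁ p * d1 θ p + w₂ p * d2 θ p) * ξ p| ≤
      κ / 20 * gradNrmSq L ξ
        + 5 / κ * (sSup ((fun p : ℝ × ℝ => |θ p|) '' Omg L)) ^ 2
            * (nrmSq L w₁ + gradNrmSq L w₁) := by
  simp only [nrmSq, gradNrmSq]
  exact main_aux L hL κ hκ w₁ w₂ θ ξ hw₁ hw₂ hθ hξ hpw₁ hpw₂ hpθ hpξ hdiv hsym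
end
end

section
/- Let L>0 and Ω=(0,L)×(-1,1). There exists a constant c>0, depending only on Ω, such that for every ν>0 and all smooth Ω-periodic, divergence-free, symmetric vector fields u=(u₁,u₂) and w=(w₁,w₂): |∫_Ω ((w·∇)u)·w dx| ≤ (ν/20)‖∇w‖² + c‖∇u‖(1 + ‖∇u‖/ν)(‖w₁‖² + ‖∇w₁‖²). -/
open MeasureTheory Real Filter

noncomputable section

/-- Cauchy–Schwarz for integrals. -/

lemma integ_cs {α : Type*} [MeasurableSpace α] (μ : Measure α) (f g : α → ℝ)
    (hf : Integrable (fun a => (f a) ^ 2) μ) (hg : Integrable (fun a => (g a) ^ 2) μ)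
    (hfg : Integrable (fun a => f a * g a) μ) :
    (∫ a, f a * g a ∂μ) ^ 2 ≤ (∫ a, (f a) ^ 2 ∂μ) * (∫ a, (g a) ^ 2 ∂μ) := by
  have key : ∀ t : ℝ, 0 ≤ (∫ a, (f a)^2 ∂μ) * (t * t) + (2 * ∫ a, f a * g a ∂μ) * t
      + (∫ a, (g a)^2 ∂μ) := by
    intro t
    have h1 : Integrable (fun a => t^2 * (f a)^2) μ := hf.const_mul _
    have h2 : Integrable (fun a => 2 * t * (f a * g a)) μ := hfg.const_mul _
    have h3 : Integrable (fun a => t^2 * (f a)^2 + 2 * t * (f a * g a)) μ := h1.add h2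
    have e : ∫ a, (t * f a + g a)^2 ∂μ
        = (∫ a, (f a)^2 ∂μ) * (t * t) + (2 * ∫ a, f a * g a ∂μ) * t + ∫ a, (g a)^2 ∂μ := by
      have : (fun a => (t * f a + g a)^2)
          = fun a => (t^2 * (f a)^2 + 2 * t * (f a * g a)) + (g a)^2 := by
        funext a; ring
      rw [this, integral_add h3 hg, integral_add h1 h2, integral_const_mul, integral_const_mul]
      ring
    have := integral_nonneg (μ := μ) (f := fun a => (t * f a + g a) ^ 2) (fun a => sq_nonneg (t * f a + g a))
    rw [e] at this; linarith
  have hd := discrim_le_zero key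
  rw [discrim] at hd
  nlinarith [hd]

lemma integrableOn_omg {L : ℝ} {g : ℝ × ℝ → ℝ} (hg : Continuous g) :
    IntegrableOn g (Omg L) := by
  have hsub : Omg L ⊆ Set.Icc 0 L ×ˢ Set.Icc (-1) 1 :=
    Set.prod_mono Set.Ioo_subset_Icc_self Set.Ioo_subset_Icc_self
  have : IsCompact (Set.Icc (0:ℝ) L ×ˢ Set.Icc (-1:ℝ) 1) := isCompact_Icc.prod isCompact_Icc
  exact (hg.continuousOn.integrableOn_compact this).mono_set hsub

lemma integrableOn_1d {a b : ℝ} {g : ℝ → ℝ} (hg : Continuous g) :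
    IntegrableOn g (Set.Ioo a b) :=
  (hg.continuousOn.integrableOn_compact isCompact_Icc).mono_set Set.Ioo_subset_Icc_self

/-- Fubini over Ω. -/
lemma fub {L : ℝ} {g : ℝ × ℝ → ℝ} (hg : Continuous g) :
    ∫ p in Omg L, g p = ∫ x in Set.Ioo 0 L, ∫ y in Set.Ioo (-1:ℝ) 1, g (x, y) := by
  have h : IntegrableOn g (Set.Ioo 0 L ×ˢ Set.Ioo (-1:ℝ) 1)
      ((volume : Measure ℝ).prod volume) := by
    rw [← Measure.volume_eq_prod ℝ ℝ]; exact integrableOn_omg hg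
  rw [Omg, Measure.volume_eq_prod ℝ ℝ]
  exact setIntegral_prod g h

lemma slice1_hasDerivAt {f : ℝ × ℝ → ℝ} (hf : ContDiff ℝ (⊤ : ℕ∞) f) (y t : ℝ) :
    HasDerivAt (fun x => f (x, y)) (d1 f (t, y)) t := by
  have hline : HasDerivAt (fun x : ℝ => (x, y)) ((1:ℝ), (0:ℝ)) t :=
    (hasDerivAt_id t).prodMk (hasDerivAt_const t y)
  exact ((hf.differentiable (by simp) (t, y)).hasFDerivAt).comp_hasDerivAt t hline

lemma slice2_hasDerivAt {f : ℝ × ℝ → ℝ} (hf : ContDiff ℝ (⊤ : ℕ∞) f) (x t : ℝ) :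
    HasDerivAt (fun y => f (x, y)) (d2 f (x, t)) t := by
  have hline : HasDerivAt (fun y : ℝ => (x, y)) ((0:ℝ), (1:ℝ)) t :=
    (hasDerivAt_const t x).prodMk (hasDerivAt_id t)
  exact ((hf.differentiable (by simp) (x, t)).hasFDerivAt).comp_hasDerivAt t hline

lemma ftc2 {f : ℝ × ℝ → ℝ} (hf : ContDiff ℝ (⊤ : ℕ∞) f) (x a b : ℝ) :
    ∫ t in a..b, d2 f (x, t) = f (x, b) - f (x, a) := by
  refine intervalIntegral.integral_eq_sub_of_hasDerivAt (fun t _ => slice2_hasDerivAt hf x t) ?_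
  have : Continuous fun t => d2 f (x, t) := by
    have : Continuous (d2 f) := by
      have h : Continuous (fderiv ℝ f) := hf.continuous_fderiv (by simp)
      exact h.clm_apply continuous_const
    exact this.comp (continuous_const.prodMk continuous_id)
  exact this.intervalIntegrable a b

lemma ftc1sq {f : ℝ × ℝ → ℝ} (hf : ContDiff ℝ (⊤ : ℕ∞) f) (y a b : ℝ) :
    ∫ t in a..b, 2 * f (t, y) * d1 f (t, y) = f (b, y) ^ 2 - f (a, y) ^ 2 := by
  have hD : ∀ t ∈ Set.uIcc a b, HasDerivAt (fun x => f (x, y) ^ 2)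
      (2 * f (t, y) * d1 f (t, y)) t := by
    intro t _
    have h := (slice1_hasDerivAt hf y t).fun_pow 2
    simpa [mul_comm, mul_assoc] using h
  refine intervalIntegral.integral_eq_sub_of_hasDerivAt hD ?_
  have hc1 : Continuous (d1 f) := by
    have h : Continuous (fderiv ℝ f) := hf.continuous_fderiv (by simp)
    exact h.clm_apply continuous_const
  have : Continuous fun t => 2 * f (t, y) * d1 f (t, y) := by
    have hft : Continuous fun t : ℝ => f (t, y) :=
      hf.continuous.comp (continuous_id.prodMk continuous_const)
    exact (continuous_const.mul hft).mul (hc1.comp (continuous_id.prodMk continuous_const))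
  exact this.intervalIntegrable a b

lemma ftc2sq {f : ℝ × ℝ → ℝ} (hf : ContDiff ℝ (⊤ : ℕ∞) f) (x a b : ℝ) :
    ∫ t in a..b, 2 * f (x, t) * d2 f (x, t) = f (x, b) ^ 2 - f (x, a) ^ 2 := by
  have hD : ∀ t ∈ Set.uIcc a b, HasDerivAt (fun y => f (x, y) ^ 2)
      (2 * f (x, t) * d2 f (x, t)) t := by
    intro t _
    have h := (slice2_hasDerivAt hf x t).fun_pow 2
    simpa [mul_comm, mul_assoc] using h
  refine intervalIntegral.integral_eq_sub_of_hasDerivAt hD ?_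
  have hc2 : Continuous (d2 f) := by
    have h : Continuous (fderiv ℝ f) := hf.continuous_fderiv (by simp)
    exact h.clm_apply continuous_const
  have : Continuous fun t => 2 * f (x, t) * d2 f (x, t) := by
    have hft : Continuous fun t : ℝ => f (x, t) :=
      hf.continuous.comp (continuous_const.prodMk continuous_id)
    exact (continuous_const.mul hft).mul (hc2.comp (continuous_const.prodMk continuous_id))
  exact this.intervalIntegrable a b

lemma inner_integrable {L : ℝ} {g : ℝ × ℝ → ℝ} (hg : Continuous g) :
    Integrable (fun x => ∫ y in Set.Ioo (-1:ℝ) 1, g (x, y)) (volume.restrict (Set.Ioo 0 L)) := by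
  have h : Integrable g ((volume.restrict (Set.Ioo 0 L)).prod
      (volume.restrict (Set.Ioo (-1:ℝ) 1))) := by
    rw [Measure.prod_restrict, ← Measure.volume_eq_prod]
    exact integrableOn_omg hg
  exact h.integral_prod_left

set_option maxHeartbeats 1000000 in
/-- Poincaré for functions vanishing on the mid-line. -/
lemma poincare {L : ℝ} {f : ℝ × ℝ → ℝ} (hf : ContDiff ℝ (⊤ : ℕ∞) f)
    (hodd : ∀ x y : ℝ, f (x, -y) = -f (x, y)) :
    (∫ p in Omg L, (f p) ^ 2) ≤ 4 * ∫ p in Omg L, (d2 f p) ^ 2 := by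
  set T := Set.Ioo (-1:ℝ) 1 with hT
  set S := Set.Ioo (0:ℝ) L with hS
  have hzero : ∀ x : ℝ, f (x, 0) = 0 := by
    intro x; have := hodd x 0; simp at this; linarith
  have hcd2 : Continuous (d2 f) := cont_d2 hf
  have hcd2sq : Continuous fun p : ℝ × ℝ => (d2 f p) ^ 2 := by fun_prop
  have hfc : Continuous f := hf.continuous
  -- H x = ∫ y in T, (d2 f (x,y))^2
  set H : ℝ → ℝ := fun x => ∫ t in T, (d2 f (x, t)) ^ 2 with hH
  have hHnn : ∀ x, 0 ≤ H x := fun x => integral_nonneg fun t => sq_nonneg _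
  -- pointwise bound: for y ∈ T, f (x,y)^2 ≤ 2 * H x
  have key : ∀ x : ℝ, ∀ y ∈ T, f (x, y) ^ 2 ≤ 2 * H x := by
    intro x y hy
    have hcont : Continuous fun t => d2 f (x, t) :=
      hcd2.comp (continuous_const.prodMk continuous_id)
    have hval : f (x, y) = ∫ t in (0:ℝ)..y, d2 f (x, t) := by
      rw [ftc2 hf x 0 y, hzero x]; ring
    have hsub : Set.uIoc (0:ℝ) y ⊆ T := by
      intro t ht
      rcases ht with ⟨h1, h2⟩
      constructor
      · calc (-1:ℝ) ≤ min 0 y := by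
              rcases hy with ⟨hy1, _⟩; simp [le_min_iff]; linarith
           _ < t := h1
      · calc t ≤ max 0 y := h2
           _ < 1 := by rcases hy with ⟨_, hy2⟩; simp [max_lt_iff]; linarith
    have habs : |f (x, y)| ≤ ∫ t in T, |d2 f (x, t)| := by
      rw [hval]
      calc |∫ t in (0:ℝ)..y, d2 f (x, t)| ≤ ∫ t in Set.uIoc 0 y, |d2 f (x, t)| := by
            simpa using intervalIntegral.norm_integral_le_integral_norm_uIoc
              (f := fun t => d2 f (x, t)) (a := 0) (b := y) (μ := volume)
        _ ≤ ∫ t in T, |d2 f (x, t)| := by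
            refine setIntegral_mono_set (integrableOn_1d hcont.abs) ?_ ?_
            · exact Filter.Eventually.of_forall fun t => abs_nonneg _
            · exact Filter.Eventually.of_forall hsub
    have hcs : (∫ t in T, |d2 f (x, t)| * 1) ^ 2
        ≤ (∫ t in T, |d2 f (x, t)| ^ 2) * (∫ t in T, (1:ℝ) ^ 2) := by
      refine integ_cs (volume.restrict T) _ _ ?_ ?_ ?_
      · simpa [sq_abs, IntegrableOn] using (integrableOn_1d (a := (-1:ℝ)) (b := 1)
          (g := fun t => (d2 f (x, t)) ^ 2) (by fun_prop))
      · simpa using (integrableOn_1d (a := (-1:ℝ)) (b := 1) (g := fun _ => (1:ℝ))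
          continuous_const)
      · simpa [IntegrableOn] using (integrableOn_1d (a := (-1:ℝ)) (b := 1)
          (g := fun t => |d2 f (x, t)|) hcont.abs)
    have h1 : (∫ t in T, (1:ℝ) ^ 2) = 2 := by
      simp [hT, Real.volume_Ioo]
      norm_num
    have habs2 : (∫ t in T, |d2 f (x, t)| ^ 2) = H x := by
      simp [hH, sq_abs]
    calc f (x, y) ^ 2 = |f (x, y)| ^ 2 := (sq_abs _).symm
      _ ≤ (∫ t in T, |d2 f (x, t)|) ^ 2 := by
          apply pow_le_pow_left₀ (abs_nonneg _) habs
      _ = (∫ t in T, |d2 f (x, t)| * 1) ^ 2 := by simp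
      _ ≤ H x * 2 := by rw [habs2, h1] at hcs; exact hcs
      _ = 2 * H x := by ring
  -- inner integral bound, for every x
  have inner : ∀ x : ℝ, (∫ y in T, f (x, y) ^ 2) ≤ 4 * H x := by
    intro x
    have hint : IntegrableOn (fun y => f (x, y) ^ 2) T := by
      apply integrableOn_1d; fun_prop
    calc (∫ y in T, f (x, y) ^ 2) ≤ ∫ _y in T, 2 * H x := by
          refine setIntegral_mono_on hint (integrableOn_const ?_) measurableSet_Ioo
            fun y hy => key x y hy
          rw [hT, Real.volume_Ioo]; exact ENNReal.ofReal_ne_top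
      _ = 4 * H x := by
          rw [setIntegral_const]
          rw [hT, Measure.real, Real.volume_Ioo]
          simp; norm_num; ring
  -- integrate in x
  have lhs := fub (L := L) (g := fun p => (f p) ^ 2) (by fun_prop)
  have rhs := fub (L := L) (g := fun p => (d2 f p) ^ 2) hcd2sq
  rw [lhs, rhs]
  have hI1 : Integrable (fun x => ∫ y in T, f (x, y) ^ 2) (volume.restrict S) :=
    inner_integrable (L := L) (g := fun p => (f p) ^ 2) (by fun_prop)
  have hI2 : Integrable (fun x => 4 * H x) (volume.restrict S) := by
    exact (inner_integrable (L := L) (g := fun p => (d2 f p)^2) hcd2sq).const_mul 4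
  calc (∫ x in S, ∫ y in T, f (x, y) ^ 2) ≤ ∫ x in S, 4 * H x :=
        integral_mono hI1 hI2 fun x => inner x
    _ = 4 * ∫ x in S, H x := integral_const_mul 4 _

lemma integrable_prod_restrict {L : ℝ} {g : ℝ × ℝ → ℝ} (hg : Continuous g) :
    Integrable g ((volume.restrict (Set.Ioo 0 L)).prod (volume.restrict (Set.Ioo (-1:ℝ) 1))) := by
  rw [Measure.prod_restrict, ← Measure.volume_eq_prod]
  exact integrableOn_omg hg

lemma inner_integrable' {L : ℝ} {g : ℝ × ℝ → ℝ} (hg : Continuous g) :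
    Integrable (fun y => ∫ x in Set.Ioo 0 L, g (x, y)) (volume.restrict (Set.Ioo (-1:ℝ) 1)) :=
  (integrable_prod_restrict (L := L) hg).integral_prod_right

/-- Fubini over Ω, other order. -/
lemma fub' {L : ℝ} {g : ℝ × ℝ → ℝ} (hg : Continuous g) :
    ∫ p in Omg L, g p = ∫ y in Set.Ioo (-1:ℝ) 1, ∫ x in Set.Ioo 0 L, g (x, y) := by
  rw [fub hg]
  exact integral_integral_swap (f := fun x y => g (x, y)) (integrable_prod_restrict hg)

/-- Cauchy–Schwarz over Ω with square-root right-hand side. -/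
lemma cs_omg {L : ℝ} {φ ψ : ℝ × ℝ → ℝ} (hφ : Continuous φ) (hψ : Continuous ψ) :
    ∫ p in Omg L, |φ p| * |ψ p| ≤
      Real.sqrt (∫ p in Omg L, (φ p) ^ 2) * Real.sqrt (∫ p in Omg L, (ψ p) ^ 2) := by
  have hcs := integ_cs (volume.restrict (Omg L)) (fun p => |φ p|) (fun p => |ψ p|)
    (by simpa [sq_abs, IntegrableOn] using integrableOn_omg (L := L) (g := fun p => (φ p)^2) (by fun_prop))
    (by simpa [sq_abs, IntegrableOn] using integrableOn_omg (L := L) (g := fun p => (ψ p)^2) (by fun_prop))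
    (integrableOn_omg (by fun_prop))
  simp only [sq_abs] at hcs
  have h0 : 0 ≤ ∫ p in Omg L, |φ p| * |ψ p| :=
    integral_nonneg fun p => mul_nonneg (abs_nonneg _) (abs_nonneg _)
  have h1 : 0 ≤ ∫ p in Omg L, (φ p) ^ 2 := integral_nonneg fun p => sq_nonneg _
  calc ∫ p in Omg L, |φ p| * |ψ p|
      = Real.sqrt ((∫ p in Omg L, |φ p| * |ψ p|) ^ 2) := (Real.sqrt_sq h0).symm
    _ ≤ Real.sqrt ((∫ p in Omg L, (φ p) ^ 2) * (∫ p in Omg L, (ψ p) ^ 2)) :=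
        Real.sqrt_le_sqrt hcs
    _ = _ := Real.sqrt_mul h1 _

set_option maxHeartbeats 1000000 in
/-- Ladyzhenskaya-type inequality on the rectangle Ω. -/
lemma lady {L : ℝ} (hL : 0 < L) {f : ℝ × ℝ → ℝ} (hf : ContDiff ℝ (⊤ : ℕ∞) f) :
    ∫ p in Omg L, (f p) ^ 4 ≤
      (1 / L * nrmSq L f + 2 * Real.sqrt (nrmSq L f) * Real.sqrt (gradNrmSq L f))
        * (1 / 2 * nrmSq L f + 2 * Real.sqrt (nrmSq L f) * Real.sqrt (gradNrmSq L f)) := by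
  set S := Set.Ioo (0:ℝ) L with hS
  set T := Set.Ioo (-1:ℝ) 1 with hT
  have hfc : Continuous f := hf.continuous
  have hc1 : Continuous (d1 f) := cont_d1 hf
  have hc2 : Continuous (d2 f) := cont_d2 hf
  set D1 : ℝ → ℝ := fun y => ∫ s in S, |2 * f (s, y) * d1 f (s, y)| with hD1
  set D2 : ℝ → ℝ := fun x => ∫ t in T, |2 * f (x, t) * d2 f (x, t)| with hD2
  set F : ℝ → ℝ := fun y => 1 / L * (∫ s in S, f (s, y) ^ 2) + D1 y with hF
  set G : ℝ → ℝ := fun x => 1 / 2 * (∫ t in T, f (x, t) ^ 2) + D2 x with hG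
  have hD1nn : ∀ y, 0 ≤ D1 y := fun y => integral_nonneg fun s => abs_nonneg _
  have hD2nn : ∀ x, 0 ≤ D2 x := fun x => integral_nonneg fun t => abs_nonneg _
  have hFnn : ∀ y, 0 ≤ F y := by
    intro y
    have : 0 ≤ ∫ s in S, f (s, y) ^ 2 := integral_nonneg fun s => sq_nonneg _
    have := hD1nn y
    positivity
  have hGnn : ∀ x, 0 ≤ G x := by
    intro x
    have : 0 ≤ ∫ t in T, f (x, t) ^ 2 := integral_nonneg fun t => sq_nonneg _
    have := hD2nn x
    positivity
  -- Claim A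
  have claimA : ∀ y : ℝ, ∀ x ∈ S, f (x, y) ^ 2 ≤ F y := by
    intro y x hx
    have step : ∀ x₀ ∈ S, f (x, y) ^ 2 ≤ f (x₀, y) ^ 2 + D1 y := by
      intro x₀ hx₀
      have hcont : Continuous fun s => 2 * f (s, y) * d1 f (s, y) := by fun_prop
      have hsub : Set.uIoc x₀ x ⊆ S := by
        intro t ht
        rcases ht with ⟨h1, h2⟩
        rcases hx with ⟨hx1, hx2⟩
        rcases hx₀ with ⟨h01, h02⟩
        constructor
        · calc (0:ℝ) < min x₀ x := lt_min h01 hx1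
            _ < t := h1
        · calc t ≤ max x₀ x := h2
            _ < L := max_lt h02 hx2
      have hb : f (x, y) ^ 2 - f (x₀, y) ^ 2 ≤ D1 y := by
        rw [← ftc1sq hf y x₀ x]
        calc ∫ s in x₀..x, 2 * f (s, y) * d1 f (s, y)
            ≤ |∫ s in x₀..x, 2 * f (s, y) * d1 f (s, y)| := le_abs_self _
          _ ≤ ∫ s in Set.uIoc x₀ x, |2 * f (s, y) * d1 f (s, y)| := by
              simpa only [Real.norm_eq_abs] using
                intervalIntegral.norm_integral_le_integral_norm_uIoc
                (f := fun s => 2 * f (s, y) * d1 f (s, y)) (a := x₀) (b := x) (μ := volume)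
          _ ≤ D1 y := by
              refine setIntegral_mono_set (integrableOn_1d hcont.abs) ?_ ?_
              · exact Filter.Eventually.of_forall fun s => abs_nonneg _
              · exact Filter.Eventually.of_forall hsub
      linarith
    have hfc2 : IntegrableOn (fun x₀ => f (x₀, y) ^ 2) S := integrableOn_1d (by fun_prop)
    have hSvol : (volume S).toReal = L := by
      rw [hS, Real.volume_Ioo]; simp; linarith
    have hconst : IntegrableOn (fun _ : ℝ => f (x, y) ^ 2) S := by
      refine integrableOn_const ?_
      rw [hS, Real.volume_Ioo]; exact ENNReal.ofReal_ne_top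
    have hconst2 : IntegrableOn (fun _ : ℝ => D1 y) S := by
      refine integrableOn_const ?_
      rw [hS, Real.volume_Ioo]; exact ENNReal.ofReal_ne_top
    have hmono : ∫ x₀ in S, f (x, y) ^ 2 ≤ ∫ x₀ in S, (f (x₀, y) ^ 2 + D1 y) :=
      setIntegral_mono_on hconst (hfc2.add hconst2) measurableSet_Ioo step
    rw [setIntegral_const, integral_add hfc2 hconst2, setIntegral_const, Measure.real, hSvol] at hmono
    simp only [smul_eq_mul] at hmono
    have hgoal : L * f (x, y) ^ 2 ≤ (∫ x₀ in S, f (x₀, y) ^ 2) + L * D1 y := by linarith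
    show f (x, y) ^ 2 ≤ 1 / L * (∫ s in S, f (s, y) ^ 2) + D1 y
    have := hD1nn y
    rw [show (1:ℝ) / L * (∫ s in S, f (s, y) ^ 2) + D1 y
        = ((∫ s in S, f (s, y) ^ 2) + L * D1 y) / L by field_simp]
    rw [le_div_iff₀ hL]
    linarith
  -- Claim B
  have claimB : ∀ x : ℝ, ∀ y ∈ T, f (x, y) ^ 2 ≤ G x := by
    intro x y hy
    have step : ∀ y₀ ∈ T, f (x, y) ^ 2 ≤ f (x, y₀) ^ 2 + D2 x := by
      intro y₀ hy₀
      have hcont : Continuous fun t => 2 * f (x, t) * d2 f (x, t) := by fun_prop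
      have hsub : Set.uIoc y₀ y ⊆ T := by
        intro t ht
        rcases ht with ⟨h1, h2⟩
        rcases hy with ⟨hy1, hy2⟩
        rcases hy₀ with ⟨h01, h02⟩
        constructor
        · calc (-1:ℝ) < min y₀ y := lt_min h01 hy1
            _ < t := h1
        · calc t ≤ max y₀ y := h2
            _ < 1 := max_lt h02 hy2
      have hb : f (x, y) ^ 2 - f (x, y₀) ^ 2 ≤ D2 x := by
        rw [← ftc2sq hf x y₀ y]
        calc ∫ t in y₀..y, 2 * f (x, t) * d2 f (x, t)
            ≤ |∫ t in y₀..y, 2 * f (x, t) * d2 f (x, t)| := le_abs_self _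
          _ ≤ ∫ t in Set.uIoc y₀ y, |2 * f (x, t) * d2 f (x, t)| := by
              simpa only [Real.norm_eq_abs] using
                intervalIntegral.norm_integral_le_integral_norm_uIoc
                (f := fun t => 2 * f (x, t) * d2 f (x, t)) (a := y₀) (b := y) (μ := volume)
          _ ≤ D2 x := by
              refine setIntegral_mono_set (integrableOn_1d hcont.abs) ?_ ?_
              · exact Filter.Eventually.of_forall fun t => abs_nonneg _
              · exact Filter.Eventually.of_forall hsub
      linarith
    have hfc2 : IntegrableOn (fun y₀ => f (x, y₀) ^ 2) T := integrableOn_1d (by fun_prop)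
    have hTvol : (volume T).toReal = 2 := by
      rw [hT, Real.volume_Ioo]; norm_num
    have hconst : IntegrableOn (fun _ : ℝ => f (x, y) ^ 2) T := by
      refine integrableOn_const ?_
      rw [hT, Real.volume_Ioo]; exact ENNReal.ofReal_ne_top
    have hconst2 : IntegrableOn (fun _ : ℝ => D2 x) T := by
      refine integrableOn_const ?_
      rw [hT, Real.volume_Ioo]; exact ENNReal.ofReal_ne_top
    have hmono : ∫ y₀ in T, f (x, y) ^ 2 ≤ ∫ y₀ in T, (f (x, y₀) ^ 2 + D2 x) :=
      setIntegral_mono_on hconst (hfc2.add hconst2) measurableSet_Ioo step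
    rw [setIntegral_const, integral_add hfc2 hconst2, setIntegral_const, Measure.real, hTvol] at hmono
    simp only [smul_eq_mul] at hmono
    show f (x, y) ^ 2 ≤ 1 / 2 * (∫ t in T, f (x, t) ^ 2) + D2 x
    have := hD2nn x
    rw [show (1:ℝ) / 2 * (∫ t in T, f (x, t) ^ 2) + D2 x
        = ((∫ t in T, f (x, t) ^ 2) + 2 * D2 x) / 2 by ring]
    rw [le_div_iff₀ (by norm_num : (0:ℝ) < 2)]
    linarith
  -- integrability of F and G
  have hFint : Integrable F (volume.restrict T) := by
    have h1 : Integrable (fun y => ∫ s in S, f (s, y) ^ 2) (volume.restrict T) :=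
      inner_integrable' (L := L) (g := fun p => f p ^ 2) (by fun_prop)
    have h2 : Integrable D1 (volume.restrict T) :=
      inner_integrable' (L := L) (g := fun p => |2 * f p * d1 f p|) (by fun_prop)
    exact (h1.const_mul _).add h2
  have hGint : Integrable G (volume.restrict S) := by
    have h1 : Integrable (fun x => ∫ t in T, f (x, t) ^ 2) (volume.restrict S) :=
      inner_integrable (L := L) (g := fun p => f p ^ 2) (by fun_prop)
    have h2 : Integrable D2 (volume.restrict S) :=
      inner_integrable (L := L) (g := fun p => |2 * f p * d2 f p|) (by fun_prop)
    exact (h1.const_mul _).add h2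
  have hFI0 : 0 ≤ ∫ y in T, F y := integral_nonneg fun y => hFnn y
  -- step 1: inner bound
  have step1 : ∀ x ∈ S, (∫ y in T, f (x, y) ^ 4) ≤ (∫ y in T, F y) * G x := by
    intro x hx
    have hpt : ∀ y ∈ T, f (x, y) ^ 4 ≤ F y * G x := by
      intro y hy
      have a := claimA y x hx
      have b := claimB x y hy
      have h := mul_le_mul a b (sq_nonneg _) (hFnn y)
      calc f (x, y) ^ 4 = f (x, y) ^ 2 * f (x, y) ^ 2 := by ring
        _ ≤ F y * G x := h
    have h4 : IntegrableOn (fun y => f (x, y) ^ 4) T := integrableOn_1d (by fun_prop)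
    calc (∫ y in T, f (x, y) ^ 4) ≤ ∫ y in T, F y * G x :=
          setIntegral_mono_on h4 (hFint.mul_const _) measurableSet_Ioo hpt
      _ = (∫ y in T, F y) * G x := integral_mul_const _ _
  -- step 2: outer bound
  have hinner4 : Integrable (fun x => ∫ y in T, f (x, y) ^ 4) (volume.restrict S) :=
    inner_integrable (L := L) (g := fun p => f p ^ 4) (by fun_prop)
  have step2 : (∫ x in S, ∫ y in T, f (x, y) ^ 4) ≤ (∫ y in T, F y) * ∫ x in S, G x := by
    calc (∫ x in S, ∫ y in T, f (x, y) ^ 4) ≤ ∫ x in S, (∫ y in T, F y) * G x :=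
          setIntegral_mono_on hinner4 (hGint.const_mul _) measurableSet_Ioo step1
      _ = (∫ y in T, F y) * ∫ x in S, G x := integral_const_mul _ _
  -- bounds for the two factors
  have hd1sq : (∫ p in Omg L, (d1 f p) ^ 2) ≤ gradNrmSq L f := by
    rw [gradNrmSq]
    refine setIntegral_mono_on (integrableOn_omg (by fun_prop)) (integrableOn_omg (by fun_prop))
      (measurableSet_Ioo.prod measurableSet_Ioo) fun p _ => by nlinarith [sq_nonneg (d2 f p)]
  have hd2sq : (∫ p in Omg L, (d2 f p) ^ 2) ≤ gradNrmSq L f := by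
    rw [gradNrmSq]
    refine setIntegral_mono_on (integrableOn_omg (by fun_prop)) (integrableOn_omg (by fun_prop))
      (measurableSet_Ioo.prod measurableSet_Ioo) fun p _ => by nlinarith [sq_nonneg (d1 f p)]
  have hNnn : 0 ≤ nrmSq L f := integral_nonneg fun p => sq_nonneg _
  have habs1 : (∫ p in Omg L, |2 * f p * d1 f p|) ≤
      2 * Real.sqrt (nrmSq L f) * Real.sqrt (gradNrmSq L f) := by
    have he : (fun p : ℝ × ℝ => |2 * f p * d1 f p|) = fun p => 2 * (|f p| * |d1 f p|) := by
      funext p; rw [abs_mul, abs_mul]; simp [abs_of_nonneg]; ring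
    rw [he, integral_const_mul]
    have hcs := cs_omg (L := L) (φ := f) (ψ := d1 f) hfc hc1
    have hs1 : Real.sqrt (∫ p in Omg L, (d1 f p) ^ 2) ≤ Real.sqrt (gradNrmSq L f) :=
      Real.sqrt_le_sqrt hd1sq
    have h0 : (0:ℝ) ≤ Real.sqrt (nrmSq L f) := Real.sqrt_nonneg _
    calc 2 * ∫ p in Omg L, |f p| * |d1 f p|
        ≤ 2 * (Real.sqrt (∫ p in Omg L, (f p) ^ 2) * Real.sqrt (∫ p in Omg L, (d1 f p) ^ 2)) := by
          linarith
      _ ≤ 2 * Real.sqrt (nrmSq L f) * Real.sqrt (gradNrmSq L f) := by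
          rw [show nrmSq L f = ∫ p in Omg L, (f p)^2 from rfl] at *
          nlinarith [Real.sqrt_nonneg (∫ p in Omg L, (f p)^2),
            Real.sqrt_nonneg (∫ p in Omg L, (d1 f p)^2)]
  have habs2 : (∫ p in Omg L, |2 * f p * d2 f p|) ≤
      2 * Real.sqrt (nrmSq L f) * Real.sqrt (gradNrmSq L f) := by
    have he : (fun p : ℝ × ℝ => |2 * f p * d2 f p|) = fun p => 2 * (|f p| * |d2 f p|) := by
      funext p; rw [abs_mul, abs_mul]; simp [abs_of_nonneg]; ring
    rw [he, integral_const_mul]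
    have hcs := cs_omg (L := L) (φ := f) (ψ := d2 f) hfc hc2
    have hs1 : Real.sqrt (∫ p in Omg L, (d2 f p) ^ 2) ≤ Real.sqrt (gradNrmSq L f) :=
      Real.sqrt_le_sqrt hd2sq
    calc 2 * ∫ p in Omg L, |f p| * |d2 f p|
        ≤ 2 * (Real.sqrt (∫ p in Omg L, (f p) ^ 2) * Real.sqrt (∫ p in Omg L, (d2 f p) ^ 2)) := by
          linarith
      _ ≤ 2 * Real.sqrt (nrmSq L f) * Real.sqrt (gradNrmSq L f) := by
          rw [show nrmSq L f = ∫ p in Omg L, (f p)^2 from rfl] at *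
          nlinarith [Real.sqrt_nonneg (∫ p in Omg L, (f p)^2),
            Real.sqrt_nonneg (∫ p in Omg L, (d2 f p)^2)]
  have hFbound : (∫ y in T, F y) ≤
      1 / L * nrmSq L f + 2 * Real.sqrt (nrmSq L f) * Real.sqrt (gradNrmSq L f) := by
    have h1 : Integrable (fun y => 1 / L * ∫ s in S, f (s, y) ^ 2) (volume.restrict T) :=
      (inner_integrable' (L := L) (g := fun p => f p ^ 2) (by fun_prop)).const_mul _
    have h2 : Integrable D1 (volume.restrict T) :=
      inner_integrable' (L := L) (g := fun p => |2 * f p * d1 f p|) (by fun_prop)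
    have he : (∫ y in T, F y)
        = 1 / L * (∫ y in T, ∫ s in S, f (s, y) ^ 2) + ∫ y in T, D1 y := by
      rw [hF]
      rw [integral_add h1 h2, integral_const_mul]
    rw [he]
    have e1 : (∫ y in T, ∫ s in S, f (s, y) ^ 2) = nrmSq L f :=
      (fub' (L := L) (g := fun p => f p ^ 2) (by fun_prop)).symm
    have e2 : (∫ y in T, D1 y) = ∫ p in Omg L, |2 * f p * d1 f p| :=
      (fub' (L := L) (g := fun p => |2 * f p * d1 f p|) (by fun_prop)).symm
    rw [e1, e2]
    have : 0 ≤ 1 / L * nrmSq L f := by positivity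
    linarith [habs1]
  have hGbound : (∫ x in S, G x) ≤
      1 / 2 * nrmSq L f + 2 * Real.sqrt (nrmSq L f) * Real.sqrt (gradNrmSq L f) := by
    have h1 : Integrable (fun x => 1 / 2 * ∫ t in T, f (x, t) ^ 2) (volume.restrict S) :=
      (inner_integrable (L := L) (g := fun p => f p ^ 2) (by fun_prop)).const_mul _
    have h2 : Integrable D2 (volume.restrict S) :=
      inner_integrable (L := L) (g := fun p => |2 * f p * d2 f p|) (by fun_prop)
    have he : (∫ x in S, G x)
        = 1 / 2 * (∫ x in S, ∫ t in T, f (x, t) ^ 2) + ∫ x in S, D2 x := by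
      rw [hG]
      rw [integral_add h1 h2, integral_const_mul]
    rw [he]
    have e1 : (∫ x in S, ∫ t in T, f (x, t) ^ 2) = nrmSq L f :=
      (fub (L := L) (g := fun p => f p ^ 2) (by fun_prop)).symm
    have e2 : (∫ x in S, D2 x) = ∫ p in Omg L, |2 * f p * d2 f p| :=
      (fub (L := L) (g := fun p => |2 * f p * d2 f p|) (by fun_prop)).symm
    rw [e1, e2]
    linarith [habs2]
  -- conclusion
  have hmain : (∫ p in Omg L, (f p) ^ 4) ≤ (∫ y in T, F y) * ∫ x in S, G x := by
    rw [fub (L := L) (g := fun p => f p ^ 4) (by fun_prop)]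
    exact step2
  have hGI0 : 0 ≤ ∫ x in S, G x := integral_nonneg fun x => hGnn x
  have hb2nn : (0:ℝ) ≤ 1 / 2 * nrmSq L f
      + 2 * Real.sqrt (nrmSq L f) * Real.sqrt (gradNrmSq L f) := by positivity
  calc (∫ p in Omg L, (f p) ^ 4) ≤ (∫ y in T, F y) * ∫ x in S, G x := hmain
    _ ≤ _ := mul_le_mul hFbound hGbound hGI0 (by positivity)

/-- Pointwise bound on the trilinear integrand. -/
lemma ptwise (a b x y z t : ℝ) :
    |(a * x + b * y) * a + (a * z + b * t) * b|
      ≤ 2 * (a ^ 2 + b ^ 2) * Real.sqrt (x ^ 2 + y ^ 2 + (z ^ 2 + t ^ 2)) := by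
  set m := Real.sqrt (x ^ 2 + y ^ 2 + (z ^ 2 + t ^ 2)) with hm
  have hmnn : 0 ≤ m := Real.sqrt_nonneg _
  have hb : ∀ v : ℝ, v ^ 2 ≤ x ^ 2 + y ^ 2 + (z ^ 2 + t ^ 2) → |v| ≤ m := by
    intro v hv
    rw [← Real.sqrt_sq_eq_abs]
    exact Real.sqrt_le_sqrt hv
  have hx : |x| ≤ m := hb x (by nlinarith [sq_nonneg y, sq_nonneg z, sq_nonneg t])
  have hy : |y| ≤ m := hb y (by nlinarith [sq_nonneg x, sq_nonneg z, sq_nonneg t])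
  have hz : |z| ≤ m := hb z (by nlinarith [sq_nonneg x, sq_nonneg y, sq_nonneg t])
  have ht : |t| ≤ m := hb t (by nlinarith [sq_nonneg x, sq_nonneg y, sq_nonneg z])
  have key : |(a * x + b * y) * a + (a * z + b * t) * b|
      ≤ |a ^ 2 * x| + |a * b * y| + (|a * b * z| + |b ^ 2 * t|) := by
    have e : (a * x + b * y) * a + (a * z + b * t) * b
        = a ^ 2 * x + a * b * y + (a * b * z + b ^ 2 * t) := by ring
    rw [e]
    calc |a ^ 2 * x + a * b * y + (a * b * z + b ^ 2 * t)|
        ≤ |a ^ 2 * x + a * b * y| + |a * b * z + b ^ 2 * t| := abs_add_le _ _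
      _ ≤ |a ^ 2 * x| + |a * b * y| + (|a * b * z| + |b ^ 2 * t|) := by
          have h1 := abs_add_le (a ^ 2 * x) (a * b * y)
          have h2 := abs_add_le (a * b * z) (b ^ 2 * t)
          linarith
  have hab : 2 * |a * b| ≤ a ^ 2 + b ^ 2 := by
    rw [abs_mul]
    nlinarith [sq_nonneg (|a| - |b|), sq_abs a, sq_abs b]
  have e1 : |a ^ 2 * x| ≤ a ^ 2 * m := by
    rw [abs_mul, abs_of_nonneg (sq_nonneg a)]
    exact mul_le_mul_of_nonneg_left hx (sq_nonneg a)
  have e2 : |a * b * y| ≤ |a * b| * m := by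
    rw [abs_mul]
    exact mul_le_mul_of_nonneg_left hy (abs_nonneg _)
  have e3 : |a * b * z| ≤ |a * b| * m := by
    rw [abs_mul]
    exact mul_le_mul_of_nonneg_left hz (abs_nonneg _)
  have e4 : |b ^ 2 * t| ≤ b ^ 2 * m := by
    rw [abs_mul, abs_of_nonneg (sq_nonneg b)]
    exact mul_le_mul_of_nonneg_left ht (sq_nonneg b)
  have h5 := mul_le_mul_of_nonneg_right hab hmnn
  linarith [key, e1, e2, e3, e4, h5]

lemma sqrt_four' : Real.sqrt 4 = 2 := by
  rw [show (4:ℝ) = 2 ^ 2 by norm_num, Real.sqrt_sq (by norm_num : (0:ℝ) ≤ 2)]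


set_option maxHeartbeats 2000000 in
/-- estimate (3.10) of the paper:
`|∫_Ω ((w·∇)u)·w| ≤ (ν/20)‖∇w‖² + c‖∇u‖(1 + ‖∇u‖/ν)(‖w₁‖² + ‖∇w₁‖²)`. -/
theorem trilinear_estimate (L : ℝ) (hL : 0 < L) :
    ∃ c : ℝ, 0 < c ∧ ∀ ν : ℝ, 0 < ν →
      ∀ u₁ u₂ w₁ w₂ : ℝ × ℝ → ℝ,
        ContDiff ℝ (⊤ : ℕ∞) u₁ → ContDiff ℝ (⊤ : ℕ∞) u₂ → ContDiff ℝ (⊤ : ℕ∞) w₁ → ContDiff ℝ (⊤ : ℕ∞) w₂ →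
        OmgPeriodic L u₁ → OmgPeriodic L u₂ → OmgPeriodic L w₁ → OmgPeriodic L w₂ →
        DivFree u₁ u₂ → DivFree w₁ w₂ → Symm u₁ u₂ → Symm w₁ w₂ →
        |∫ p in Omg L,
            ((w₁ p * d1 u₁ p + w₂ p * d2 u₁ p) * w₁ p
              + (w₁ p * d1 u₂ p + w₂ p * d2 u₂ p) * w₂ p)| ≤
          ν / 20 * (gradNrmSq L w₁ + gradNrmSq L w₂)
            + c * Real.sqrt (gradNrmSq L u₁ + gradNrmSq L u₂)
                * (1 + Real.sqrt (gradNrmSq L u₁ + gradNrmSq L u₂) / ν)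
                * (nrmSq L w₁ + gradNrmSq L w₁) := by
  set K : ℝ := 1 / L + 2 with hK
  have hKpos : 0 < K := by positivity
  set c₀ : ℝ := 2 * Real.sqrt 2 * K with hc₀
  have hc₀pos : 0 < c₀ := by positivity
  refine ⟨11 / 2 * c₀ + 20 * c₀ ^ 2 + 1, by positivity, ?_⟩
  intro ν hν u₁ u₂ w₁ w₂ hu₁ hu₂ hw₁ hw₂ _ _ _ _ hdivu hdivw hsymu hsymw
  set N₁ := nrmSq L w₁ with hN₁
  set A₁ := gradNrmSq L w₁ with hA₁
  set A₂ := gradNrmSq L w₂ with hA₂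
  set Γ := Real.sqrt (gradNrmSq L u₁ + gradNrmSq L u₂) with hΓ
  have hΓnn : 0 ≤ Γ := Real.sqrt_nonneg _
  have hN₁nn : 0 ≤ N₁ := integral_nonneg fun p => sq_nonneg _
  have hA₁nn : 0 ≤ A₁ := integral_nonneg fun p => by positivity
  have hA₂nn : 0 ≤ A₂ := integral_nonneg fun p => by positivity
  have hN₂nn : 0 ≤ nrmSq L w₂ := integral_nonneg fun p => sq_nonneg _
  -- continuity facts
  have hcu1 : Continuous u₁ := hu₁.continuous
  have hcu2 : Continuous u₂ := hu₂.continuous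
  have hcw1 : Continuous w₁ := hw₁.continuous
  have hcw2 : Continuous w₂ := hw₂.continuous
  have hcd1u1 : Continuous (d1 u₁) := cont_d1 hu₁
  have hcd2u1 : Continuous (d2 u₁) := cont_d2 hu₁
  have hcd1u2 : Continuous (d1 u₂) := cont_d1 hu₂
  have hcd2u2 : Continuous (d2 u₂) := cont_d2 hu₂
  have hcd1w1 : Continuous (d1 w₁) := cont_d1 hw₁
  have hcd2w2 : Continuous (d2 w₂) := cont_d2 hw₂
  have hcd2w1 : Continuous (d2 w₁) := cont_d2 hw₁
  have hcd1w2 : Continuous (d1 w₂) := cont_d1 hw₂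
  -- the gradient magnitude of u
  set m : ℝ × ℝ → ℝ :=
    fun p => Real.sqrt ((d1 u₁ p) ^ 2 + (d2 u₁ p) ^ 2 + ((d1 u₂ p) ^ 2 + (d2 u₂ p) ^ 2))
    with hmdef
  have hcm : Continuous m := by
    apply Continuous.sqrt; fun_prop
  have hmnn : ∀ p, 0 ≤ m p := fun p => Real.sqrt_nonneg _
  set φ : ℝ × ℝ → ℝ := fun p => (w₁ p) ^ 2 + (w₂ p) ^ 2 with hφdef
  have hcφ : Continuous φ := by fun_prop
  have hφnn : ∀ p, 0 ≤ φ p := fun p => by positivity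
  -- Step 1: |I| ≤ 2 √(∫φ²) Γ
  have hmsq : (∫ p in Omg L, (m p) ^ 2) = gradNrmSq L u₁ + gradNrmSq L u₂ := by
    have e : (fun p => (m p) ^ 2)
        = fun p => ((d1 u₁ p) ^ 2 + (d2 u₁ p) ^ 2) + ((d1 u₂ p) ^ 2 + (d2 u₂ p) ^ 2) := by
      funext p
      rw [hmdef]
      rw [Real.sq_sqrt (by positivity)]
    rw [e, integral_add (integrableOn_omg (by fun_prop)) (integrableOn_omg (by fun_prop))]
    rfl
  have step1 : |∫ p in Omg L,
      ((w₁ p * d1 u₁ p + w₂ p * d2 u₁ p) * w₁ p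
        + (w₁ p * d1 u₂ p + w₂ p * d2 u₂ p) * w₂ p)|
      ≤ 2 * (Real.sqrt (∫ p in Omg L, (φ p) ^ 2) * Γ) := by
    have habs : |∫ p in Omg L,
        ((w₁ p * d1 u₁ p + w₂ p * d2 u₁ p) * w₁ p
          + (w₁ p * d1 u₂ p + w₂ p * d2 u₂ p) * w₂ p)|
        ≤ ∫ p in Omg L, |(w₁ p * d1 u₁ p + w₂ p * d2 u₁ p) * w₁ p
          + (w₁ p * d1 u₂ p + w₂ p * d2 u₂ p) * w₂ p| := by
      simpa [Real.norm_eq_abs] using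
        norm_integral_le_integral_norm (μ := volume.restrict (Omg L))
          (f := fun p => (w₁ p * d1 u₁ p + w₂ p * d2 u₁ p) * w₁ p
            + (w₁ p * d1 u₂ p + w₂ p * d2 u₂ p) * w₂ p)
    have hmono : (∫ p in Omg L, |(w₁ p * d1 u₁ p + w₂ p * d2 u₁ p) * w₁ p
          + (w₁ p * d1 u₂ p + w₂ p * d2 u₂ p) * w₂ p|)
        ≤ ∫ p in Omg L, 2 * (φ p * m p) := by
      refine setIntegral_mono_on (integrableOn_omg (by fun_prop))
        (integrableOn_omg (by fun_prop)) (measurableSet_Ioo.prod measurableSet_Ioo) ?_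
      intro p _
      have := ptwise (w₁ p) (w₂ p) (d1 u₁ p) (d2 u₁ p) (d1 u₂ p) (d2 u₂ p)
      calc |(w₁ p * d1 u₁ p + w₂ p * d2 u₁ p) * w₁ p
          + (w₁ p * d1 u₂ p + w₂ p * d2 u₂ p) * w₂ p|
          ≤ 2 * ((w₁ p) ^ 2 + (w₂ p) ^ 2) *
            Real.sqrt ((d1 u₁ p) ^ 2 + (d2 u₁ p) ^ 2 + ((d1 u₂ p) ^ 2 + (d2 u₂ p) ^ 2)) := this
        _ = 2 * (φ p * m p) := by rw [hφdef, hmdef]; ring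
    have he : (∫ p in Omg L, 2 * (φ p * m p)) = 2 * ∫ p in Omg L, |φ p| * |m p| := by
      rw [integral_const_mul]
      congr 1
      refine setIntegral_congr_fun (measurableSet_Ioo.prod measurableSet_Ioo) ?_
      intro p _
      show φ p * m p = |φ p| * |m p|
      rw [abs_of_nonneg (hφnn p), abs_of_nonneg (hmnn p)]
    have hcs := cs_omg (L := L) hcφ hcm
    rw [hmsq] at hcs
    have : (∫ p in Omg L, |φ p| * |m p|) ≤ Real.sqrt (∫ p in Omg L, (φ p) ^ 2) * Γ := hcs
    calc |∫ p in Omg L, _| ≤ _ := habs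
      _ ≤ ∫ p in Omg L, 2 * (φ p * m p) := hmono
      _ = 2 * ∫ p in Omg L, |φ p| * |m p| := he
      _ ≤ 2 * (Real.sqrt (∫ p in Omg L, (φ p) ^ 2) * Γ) := by linarith
  -- Step 2: Ladyzhenskaya bound for √(∫φ²)
  set X₁ : ℝ := N₁ + Real.sqrt N₁ * Real.sqrt A₁ with hX₁
  set X₂ : ℝ := nrmSq L w₂ + Real.sqrt (nrmSq L w₂) * Real.sqrt A₂ with hX₂
  have hX₁nn : 0 ≤ X₁ := by positivity
  have hX₂nn : 0 ≤ X₂ := by positivity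
  have hw1_4 : (∫ p in Omg L, (w₁ p) ^ 4) ≤ K ^ 2 * X₁ ^ 2 := by
    have h := lady hL hw₁
    rw [← hN₁, ← hA₁] at h
    have f1 : 1 / L * N₁ + 2 * Real.sqrt N₁ * Real.sqrt A₁ ≤ K * X₁ := by
      rw [hX₁, hK]
      have h1 : 0 ≤ Real.sqrt N₁ * Real.sqrt A₁ := by positivity
      have h2 : (0:ℝ) < 1 / L := by positivity
      nlinarith [mul_nonneg h2.le h1, mul_nonneg h2.le hN₁nn]
    have f2 : 1 / 2 * N₁ + 2 * Real.sqrt N₁ * Real.sqrt A₁ ≤ K * X₁ := by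
      rw [hX₁, hK]
      have h1 : 0 ≤ Real.sqrt N₁ * Real.sqrt A₁ := by positivity
      have h2 : (0:ℝ) < 1 / L := by positivity
      nlinarith [mul_nonneg h2.le h1, mul_nonneg h2.le hN₁nn]
    have f2nn : (0:ℝ) ≤ 1 / 2 * N₁ + 2 * Real.sqrt N₁ * Real.sqrt A₁ := by positivity
    calc (∫ p in Omg L, (w₁ p) ^ 4) ≤ _ := h
      _ ≤ (K * X₁) * (K * X₁) := mul_le_mul f1 f2 f2nn (by positivity)
      _ = K ^ 2 * X₁ ^ 2 := by ring
  have hw2_4 : (∫ p in Omg L, (w₂ p) ^ 4) ≤ K ^ 2 * X₂ ^ 2 := by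
    have h := lady hL hw₂
    rw [← hA₂] at h
    have f1 : 1 / L * nrmSq L w₂ + 2 * Real.sqrt (nrmSq L w₂) * Real.sqrt A₂ ≤ K * X₂ := by
      rw [hX₂, hK]
      have h1 : 0 ≤ Real.sqrt (nrmSq L w₂) * Real.sqrt A₂ := by positivity
      have h2 : (0:ℝ) < 1 / L := by positivity
      nlinarith [mul_nonneg h2.le h1, mul_nonneg h2.le hN₂nn]
    have f2 : 1 / 2 * nrmSq L w₂ + 2 * Real.sqrt (nrmSq L w₂) * Real.sqrt A₂ ≤ K * X₂ := by
      rw [hX₂, hK]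
      have h1 : 0 ≤ Real.sqrt (nrmSq L w₂) * Real.sqrt A₂ := by positivity
      have h2 : (0:ℝ) < 1 / L := by positivity
      nlinarith [mul_nonneg h2.le h1, mul_nonneg h2.le hN₂nn]
    have f2nn : (0:ℝ) ≤ 1 / 2 * nrmSq L w₂
        + 2 * Real.sqrt (nrmSq L w₂) * Real.sqrt A₂ := by positivity
    calc (∫ p in Omg L, (w₂ p) ^ 4) ≤ _ := h
      _ ≤ (K * X₂) * (K * X₂) := mul_le_mul f1 f2 f2nn (by positivity)
      _ = K ^ 2 * X₂ ^ 2 := by ring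
  have hφ4 : (∫ p in Omg L, (φ p) ^ 2)
      ≤ 2 * (∫ p in Omg L, (w₁ p) ^ 4) + 2 * ∫ p in Omg L, (w₂ p) ^ 4 := by
    have hmono : (∫ p in Omg L, (φ p) ^ 2)
        ≤ ∫ p in Omg L, (2 * (w₁ p) ^ 4 + 2 * (w₂ p) ^ 4) := by
      refine setIntegral_mono_on (integrableOn_omg (by fun_prop))
        (integrableOn_omg (by fun_prop)) (measurableSet_Ioo.prod measurableSet_Ioo) ?_
      intro p _
      show ((w₁ p) ^ 2 + (w₂ p) ^ 2) ^ 2 ≤ 2 * (w₁ p) ^ 4 + 2 * (w₂ p) ^ 4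
      nlinarith [sq_nonneg ((w₁ p) ^ 2 - (w₂ p) ^ 2)]
    calc (∫ p in Omg L, (φ p) ^ 2) ≤ _ := hmono
      _ = 2 * (∫ p in Omg L, (w₁ p) ^ 4) + 2 * ∫ p in Omg L, (w₂ p) ^ 4 := by
          rw [integral_add ((integrableOn_omg (by fun_prop)).const_mul _)
            ((integrableOn_omg (by fun_prop)).const_mul _), integral_const_mul,
            integral_const_mul]
  have hsqrtφ : Real.sqrt (∫ p in Omg L, (φ p) ^ 2) ≤ Real.sqrt 2 * K * (X₁ + X₂) := by
    have hb : (∫ p in Omg L, (φ p) ^ 2) ≤ (Real.sqrt 2 * K * (X₁ + X₂)) ^ 2 := by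
      have e : (Real.sqrt 2 * K * (X₁ + X₂)) ^ 2 = 2 * (K ^ 2 * (X₁ + X₂) ^ 2) := by
        rw [mul_pow, mul_pow, Real.sq_sqrt (by norm_num : (0:ℝ) ≤ 2)]
        ring
      rw [e]
      nlinarith [mul_nonneg hX₁nn hX₂nn, sq_nonneg K]
    calc Real.sqrt (∫ p in Omg L, (φ p) ^ 2)
        ≤ Real.sqrt ((Real.sqrt 2 * K * (X₁ + X₂)) ^ 2) := Real.sqrt_le_sqrt hb
      _ = Real.sqrt 2 * K * (X₁ + X₂) := Real.sqrt_sq (by positivity)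
  -- Step 3: Poincaré for w₂
  have hpoin : nrmSq L w₂ ≤ 4 * A₁ := by
    have h := poincare (L := L) hw₂ hsymw.2
    have he : (∫ p in Omg L, (d2 w₂ p) ^ 2) = ∫ p in Omg L, (d1 w₁ p) ^ 2 := by
      refine setIntegral_congr_fun (measurableSet_Ioo.prod measurableSet_Ioo) ?_
      intro p _
      show (d2 w₂ p) ^ 2 = (d1 w₁ p) ^ 2
      have := hdivw p
      rw [show d2 w₂ p = -(d1 w₁ p) by linarith]
      ring
    have hle : (∫ p in Omg L, (d1 w₁ p) ^ 2) ≤ A₁ := by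
      rw [hA₁, gradNrmSq]
      refine setIntegral_mono_on (integrableOn_omg (by fun_prop))
        (integrableOn_omg (by fun_prop)) (measurableSet_Ioo.prod measurableSet_Ioo) ?_
      intro p _
      nlinarith [sq_nonneg (d2 w₁ p)]
    rw [he] at h
    calc nrmSq L w₂ ≤ 4 * ∫ p in Omg L, (d1 w₁ p) ^ 2 := h
      _ ≤ 4 * A₁ := by linarith
  have hsqrtN₂ : Real.sqrt (nrmSq L w₂) ≤ 2 * Real.sqrt A₁ := by
    calc Real.sqrt (nrmSq L w₂) ≤ Real.sqrt (4 * A₁) := Real.sqrt_le_sqrt hpoin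
      _ = 2 * Real.sqrt A₁ := by
          rw [Real.sqrt_mul (by norm_num : (0:ℝ) ≤ 4), sqrt_four']
  -- Step 4: combine
  have hc₀eq : 2 * (Real.sqrt 2 * K) = c₀ := by rw [hc₀]; ring
  have main : |∫ p in Omg L,
      ((w₁ p * d1 u₁ p + w₂ p * d2 u₁ p) * w₁ p
        + (w₁ p * d1 u₂ p + w₂ p * d2 u₂ p) * w₂ p)|
      ≤ c₀ * Γ * (X₁ + X₂) := by
    calc |∫ p in Omg L, _| ≤ 2 * (Real.sqrt (∫ p in Omg L, (φ p) ^ 2) * Γ) := step1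
      _ ≤ 2 * ((Real.sqrt 2 * K * (X₁ + X₂)) * Γ) := by
          have := mul_le_mul_of_nonneg_right hsqrtφ hΓnn
          linarith
      _ = c₀ * Γ * (X₁ + X₂) := by rw [hc₀]; ring
  -- bound X₁ + X₂
  have hX₁b : X₁ ≤ 3 / 2 * (N₁ + A₁) := by
    rw [hX₁]
    nlinarith [sq_nonneg (Real.sqrt N₁ - Real.sqrt A₁), Real.sq_sqrt hN₁nn, Real.sq_sqrt hA₁nn]
  have hX₂b : X₂ ≤ 4 * A₁ + 2 * Real.sqrt A₁ * Real.sqrt A₂ := by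
    rw [hX₂]
    have h := mul_le_mul_of_nonneg_right hsqrtN₂ (Real.sqrt_nonneg A₂)
    linarith [hpoin]
  have hXsum : X₁ + X₂ ≤ 3 / 2 * N₁ + 11 / 2 * A₁ + 2 * Real.sqrt A₁ * Real.sqrt A₂ := by
    linarith
  -- Young's inequality for the cross term
  have young : c₀ * Γ * (2 * Real.sqrt A₁ * Real.sqrt A₂)
      ≤ ν / 20 * A₂ + 20 / ν * (c₀ ^ 2 * Γ ^ 2 * A₁) := by
    have key : 40 * ν * (c₀ * Γ * (Real.sqrt A₁ * Real.sqrt A₂))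
        ≤ ν ^ 2 * A₂ + 400 * (c₀ ^ 2 * Γ ^ 2 * A₁) := by
      have ea : 400 * (c₀ ^ 2 * Γ ^ 2) * (Real.sqrt A₁) ^ 2 = 400 * (c₀ ^ 2 * Γ ^ 2 * A₁) := by
        rw [Real.sq_sqrt hA₁nn]; ring
      have eb : ν ^ 2 * (Real.sqrt A₂) ^ 2 = ν ^ 2 * A₂ := by
        rw [Real.sq_sqrt hA₂nn]
      nlinarith [sq_nonneg (ν * Real.sqrt A₂ - 20 * (c₀ * Γ * Real.sqrt A₁)), ea, eb]
    have h2 : 0 ≤ (ν ^ 2 * A₂ + 400 * (c₀ ^ 2 * Γ ^ 2 * A₁)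
        - 40 * ν * (c₀ * Γ * (Real.sqrt A₁ * Real.sqrt A₂))) / (20 * ν) :=
      div_nonneg (by linarith) (by positivity)
    have h3 : (ν ^ 2 * A₂ + 400 * (c₀ ^ 2 * Γ ^ 2 * A₁)
        - 40 * ν * (c₀ * Γ * (Real.sqrt A₁ * Real.sqrt A₂))) / (20 * ν)
        = ν / 20 * A₂ + 20 / ν * (c₀ ^ 2 * Γ ^ 2 * A₁)
          - c₀ * Γ * (2 * Real.sqrt A₁ * Real.sqrt A₂) := by
      field_simp
      ring
    rw [h3] at h2
    linarith
  -- the Γ²/ν term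
  have hgam : 20 / ν * (c₀ ^ 2 * Γ ^ 2 * A₁)
      ≤ 20 * c₀ ^ 2 * (Γ * (1 + Γ / ν) * (N₁ + A₁)) := by
    have h1 : Γ ^ 2 / ν ≤ Γ * (1 + Γ / ν) := by
      have h0 : 0 ≤ Γ / ν := div_nonneg hΓnn hν.le
      have := mul_le_mul_of_nonneg_left (show Γ / ν ≤ 1 + Γ / ν by linarith) hΓnn
      calc Γ ^ 2 / ν = Γ * (Γ / ν) := by ring
        _ ≤ Γ * (1 + Γ / ν) := this
    have h2 : Γ ^ 2 / ν * A₁ ≤ Γ * (1 + Γ / ν) * (N₁ + A₁) := by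
      have hA : A₁ ≤ N₁ + A₁ := by linarith
      have hq : 0 ≤ Γ ^ 2 / ν := by positivity
      have hr : 0 ≤ Γ * (1 + Γ / ν) := by positivity
      exact mul_le_mul h1 hA hA₁nn hr
    calc 20 / ν * (c₀ ^ 2 * Γ ^ 2 * A₁) = 20 * c₀ ^ 2 * (Γ ^ 2 / ν * A₁) := by
          field_simp
      _ ≤ 20 * c₀ ^ 2 * (Γ * (1 + Γ / ν) * (N₁ + A₁)) := by
          apply mul_le_mul_of_nonneg_left h2 (by positivity)
  -- the plain Γ term
  have hplain : c₀ * Γ * (3 / 2 * N₁ + 11 / 2 * A₁)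
      ≤ 11 / 2 * c₀ * (Γ * (1 + Γ / ν) * (N₁ + A₁)) := by
    have h0 : 0 ≤ Γ / ν := div_nonneg hΓnn hν.le
    have h1 : Γ * (N₁ + A₁) ≤ Γ * (1 + Γ / ν) * (N₁ + A₁) := by
      nlinarith [mul_nonneg hΓnn (add_nonneg hN₁nn hA₁nn), mul_nonneg (mul_nonneg hΓnn h0) (add_nonneg hN₁nn hA₁nn)]
    have h2 : c₀ * Γ * (3 / 2 * N₁ + 11 / 2 * A₁) ≤ 11 / 2 * c₀ * (Γ * (N₁ + A₁)) := by
      nlinarith [mul_nonneg hΓnn hN₁nn, mul_nonneg hΓnn hA₁nn, hc₀pos.le]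
    calc c₀ * Γ * (3 / 2 * N₁ + 11 / 2 * A₁) ≤ 11 / 2 * c₀ * (Γ * (N₁ + A₁)) := h2
      _ ≤ 11 / 2 * c₀ * (Γ * (1 + Γ / ν) * (N₁ + A₁)) := by
          apply mul_le_mul_of_nonneg_left h1 (by positivity)
  -- final assembly
  have hfinal : c₀ * Γ * (X₁ + X₂)
      ≤ ν / 20 * (A₁ + A₂)
        + (11 / 2 * c₀ + 20 * c₀ ^ 2 + 1) * Γ * (1 + Γ / ν) * (N₁ + A₁) := by
    have hmul : c₀ * Γ * (X₁ + X₂)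
        ≤ c₀ * Γ * (3 / 2 * N₁ + 11 / 2 * A₁ + 2 * Real.sqrt A₁ * Real.sqrt A₂) :=
      mul_le_mul_of_nonneg_left hXsum (by positivity)
    have hexp : c₀ * Γ * (3 / 2 * N₁ + 11 / 2 * A₁ + 2 * Real.sqrt A₁ * Real.sqrt A₂)
        = c₀ * Γ * (3 / 2 * N₁ + 11 / 2 * A₁) + c₀ * Γ * (2 * Real.sqrt A₁ * Real.sqrt A₂) := by
      ring
    have hpos : 0 ≤ Γ * (1 + Γ / ν) * (N₁ + A₁) := by positivity
    have hA₁' : 0 ≤ ν / 20 * A₁ := by positivity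
    calc c₀ * Γ * (X₁ + X₂)
        ≤ c₀ * Γ * (3 / 2 * N₁ + 11 / 2 * A₁) + c₀ * Γ * (2 * Real.sqrt A₁ * Real.sqrt A₂) := by
          rw [← hexp]; exact hmul
      _ ≤ 11 / 2 * c₀ * (Γ * (1 + Γ / ν) * (N₁ + A₁))
          + (ν / 20 * A₂ + 20 / ν * (c₀ ^ 2 * Γ ^ 2 * A₁)) := by linarith
      _ ≤ 11 / 2 * c₀ * (Γ * (1 + Γ / ν) * (N₁ + A₁))
          + (ν / 20 * A₂ + 20 * c₀ ^ 2 * (Γ * (1 + Γ / ν) * (N₁ + A₁))) := by linarith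
      _ ≤ ν / 20 * (A₁ + A₂)
          + (11 / 2 * c₀ + 20 * c₀ ^ 2 + 1) * Γ * (1 + Γ / ν) * (N₁ + A₁) := by
          nlinarith [hpos, hA₁']
  calc |∫ p in Omg L, _| ≤ c₀ * Γ * (X₁ + X₂) := main
    _ ≤ _ := hfinal
end
end
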